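/- arXiv:2006.01808 — 13 statements merged into one kernel-verified Lean document; each statement's English description precedes it below -/
import Mathlib

section
/- Let v > 0 and integers a, b with 2 ≤ b ≤ a. Define x* = v·a·(b−1)/(b²·(a−1)) and u(x) = x^{a/(a−1)}·v / (x^{a/(a−1)} + (b−1)·(x*)^{a/(a−1)}) − x for x ≥ 0. Then x* is a global maximizer of u on ℝ_{≥0}. -/
theorem stmt_2 (v : ℝ) (hv : 0 < v) (a b : ℕ) (hb : 2 ≤ b) (hba : b ≤ a)
    (xs : ℝ) (hxs : xs = v * a * ((b : ℝ) - 1) / ((b : ℝ) ^ 2 * ((a : ℝ) - 1)))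
    (u : ℝ → ℝ)
    (hu : ∀ x : ℝ, u x =
      x ^ ((a : ℝ) / ((a : ℝ) - 1)) * v /
        (x ^ ((a : ℝ) / ((a : ℝ) - 1)) + ((b : ℝ) - 1) * xs ^ ((a : ℝ) / ((a : ℝ) - 1)))
      - x) :
    ∀ x : ℝ, 0 ≤ x → u x ≤ u xs := by
  have ha2 : 2 ≤ a := hb.trans hba
  have haR : (2:ℝ) ≤ (a:ℝ) := by exact_mod_cast ha2
  have hbR : (2:ℝ) ≤ (b:ℝ) := by exact_mod_cast hb
  have hbaR : (b:ℝ) ≤ (a:ℝ) := by exact_mod_cast hba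
  have ha1 : (0:ℝ) < (a:ℝ) - 1 := by linarith
  set p : ℝ := (a:ℝ) / ((a:ℝ) - 1) with hpdef
  have hp1 : 1 < p := by rw [hpdef, lt_div_iff₀ ha1]; linarith
  have hpb : p * ((b:ℝ) - 1) ≤ (b:ℝ) := by
    rw [hpdef, div_mul_eq_mul_div, div_le_iff₀ ha1]; nlinarith
  have hxs0 : 0 < xs := by
    rw [hxs]
    exact div_pos (mul_pos (mul_pos hv (by linarith)) (by linarith))
      (mul_pos (by positivity) ha1)
  have hxs2 : xs * (b:ℝ)^2 = v * p * ((b:ℝ) - 1) := by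
    rw [hxs, hpdef]; field_simp
  clear_value p
  -- key inequality
  have key : ∀ t : ℝ, 0 ≤ t →
      (b:ℝ) * (t ^ p - 1) ≤ p * (t - 1) * (t ^ p + (b:ℝ) - 1) := by
    intro t ht
    rcases ht.eq_or_lt with h0 | h0
    · rw [← h0, Real.zero_rpow (by positivity)]
      nlinarith
    · have hpb0 : 0 < p + (b:ℝ) := by linarith
      have hw1 : 0 ≤ p / (p + (b:ℝ)) := by positivity
      have hw2 : 0 ≤ p * ((b:ℝ)-1) / (p + (b:ℝ)) := by
        apply div_nonneg (by nlinarith) hpb0.le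
      have hw3 : 0 ≤ ((b:ℝ) - p * ((b:ℝ)-1)) / (p + (b:ℝ)) := by
        apply div_nonneg (by linarith) hpb0.le
      have hsum : p / (p+(b:ℝ)) + p * ((b:ℝ)-1)/(p+(b:ℝ))
          + ((b:ℝ) - p*((b:ℝ)-1))/(p+(b:ℝ)) = 1 := by
        field_simp
        ring
      have h1 : (0:ℝ) ≤ t ^ (p+1) := Real.rpow_nonneg ht _
      have amgm := Real.geom_mean_le_arith_mean3_weighted hw1 hw2 hw3 h1 ht zero_le_one hsum
      have hgm : (t ^ (p+1)) ^ (p/(p+(b:ℝ))) * t ^ (p*((b:ℝ)-1)/(p+(b:ℝ)))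
          * (1:ℝ) ^ (((b:ℝ) - p*((b:ℝ)-1))/(p+(b:ℝ))) = t ^ p := by
        rw [Real.one_rpow, mul_one, ← Real.rpow_mul ht, ← Real.rpow_add h0]
        congr 1
        field_simp
        ring
      rw [hgm] at amgm
      have hmul := mul_le_mul_of_nonneg_left amgm hpb0.le
      have hexp : (p + (b:ℝ)) * (p/(p+(b:ℝ)) * t^(p+1) + p*((b:ℝ)-1)/(p+(b:ℝ)) * t
          + ((b:ℝ) - p*((b:ℝ)-1))/(p+(b:ℝ)) * 1)
          = p * t^(p+1) + p*((b:ℝ)-1)*t + ((b:ℝ) - p*((b:ℝ)-1)) := by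
        field_simp
      rw [hexp] at hmul
      have hts : t ^ (p+1) = t ^ p * t := by
        rw [Real.rpow_add h0, Real.rpow_one]
      rw [hts] at hmul
      nlinarith [hmul]
  intro x hx
  rw [hu x, hu xs]
  have hX : 0 < xs ^ p := Real.rpow_pos_of_pos hxs0 p
  have hA : 0 ≤ x ^ p := Real.rpow_nonneg hx p
  have hden : 0 < x ^ p + ((b:ℝ)-1) * xs ^ p := by nlinarith
  have hbne : ((b:ℝ)) ≠ 0 := by positivity
  have hXne : xs ^ p ≠ 0 := hX.ne'
  have husx : xs ^ p * v / (xs ^ p + ((b:ℝ)-1) * xs ^ p) = v / (b:ℝ) := by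
    have hdenxs : xs ^ p + ((b:ℝ)-1) * xs ^ p = (b:ℝ) * xs ^ p := by ring
    rw [hdenxs]
    field_simp
  rw [husx]
  set t := x / xs with htdef
  clear_value t
  have ht0 : 0 ≤ t := htdef ▸ div_nonneg hx hxs0.le
  have hkey := key t ht0
  have hxx : x = t * xs := by rw [htdef]; field_simp
  have hxp : x ^ p = t ^ p * xs ^ p := by
    conv_lhs => rw [hxx]
    exact Real.mul_rpow ht0 hxs0.le
  have hT0 : 0 ≤ t ^ p := Real.rpow_nonneg ht0 p
  have hbpos : (0:ℝ) < (b:ℝ) := by linarith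
  have hb2 : (0:ℝ) < (b:ℝ)^2 := by positivity
  -- main inequality with denominators cleared
  have main : x ^ p * v * (b:ℝ)^2 ≤ ((v/(b:ℝ) - xs + x) * (x ^ p + ((b:ℝ)-1) * xs ^ p)) * (b:ℝ)^2 := by
    have h1 : ((v/(b:ℝ) - xs + x) * (x ^ p + ((b:ℝ)-1) * xs ^ p)) * (b:ℝ)^2
        = (v*(b:ℝ) - xs*(b:ℝ)^2 + x*(b:ℝ)^2) * (x ^ p + ((b:ℝ)-1) * xs ^ p) := by
      field_simp
    rw [h1, hxp]
    have h2 : v*(b:ℝ) - xs*(b:ℝ)^2 + x*(b:ℝ)^2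
        = v*((b:ℝ) + p*((b:ℝ)-1)*(t-1)) := by
      linear_combination (b:ℝ)^2*hxx + (t-1)*hxs2
    rw [h2]
    set T := t ^ p with hTdef
    set X := xs ^ p with hXdef
    clear_value T X
    have hkeyv := mul_le_mul_of_nonneg_left hkey
      (show (0:ℝ) ≤ v * ((b:ℝ)-1) * X from
        mul_nonneg (mul_nonneg hv.le (by linarith)) hX.le)
    have hring : v*((b:ℝ) + p*((b:ℝ)-1)*(t-1)) * (T*X + ((b:ℝ)-1)*X) - T*X*v*(b:ℝ)^2
        = v * ((b:ℝ)-1) * X * (p * (t - 1) * (T + (b:ℝ) - 1))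
          - v * ((b:ℝ)-1) * X * ((b:ℝ) * (T - 1)) := by ring
    linarith [hkeyv, hring]
  have main2 : x ^ p * v ≤ (v/(b:ℝ) - xs + x) * (x ^ p + ((b:ℝ)-1) * xs ^ p) :=
    le_of_mul_le_mul_right (by linarith [main]) hb2
  rw [sub_le_iff_le_add, div_le_iff₀ hden]
  linarith [main2]
end

section
/- Let v > 0, integers 2 ≤ b ≤ a, x* = v·a·(b−1)/(b²·(a−1)), and u(x) = x^{a/(a−1)}·v/(x^{a/(a−1)} + (b−1)·(x*)^{a/(a−1)}) − x. Then u(x*) ≥ 0 = u(0). -/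
theorem stmt_3 (v : ℝ) (hv : 0 < v) (a b : ℕ) (hb : 2 ≤ b) (hba : b ≤ a)
    (xs : ℝ) (hxs : xs = v * a * ((b : ℝ) - 1) / ((b : ℝ) ^ 2 * ((a : ℝ) - 1)))
    (u : ℝ → ℝ)
    (hu : ∀ x : ℝ, u x =
      x ^ ((a : ℝ) / ((a : ℝ) - 1)) * v /
        (x ^ ((a : ℝ) / ((a : ℝ) - 1)) + ((b : ℝ) - 1) * xs ^ ((a : ℝ) / ((a : ℝ) - 1)))
      - x) :
    0 ≤ u xs ∧ u 0 = 0 := by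
  have hb2 : (2:ℝ) ≤ b := by exact_mod_cast hb
  have hba' : (b:ℝ) ≤ a := by exact_mod_cast hba
  have ha2 : (2:ℝ) ≤ a := le_trans hb2 hba'
  constructor
  · have hxp : 0 < xs := by
      rw [hxs]
      apply div_pos (by nlinarith [mul_pos hv (show (0:ℝ) < a*((b:ℝ)-1) by nlinarith)]) (by nlinarith)
    set p := (a:ℝ)/((a:ℝ)-1) with hp
    have ht : 0 < xs ^ p := Real.rpow_pos_of_pos hxp p
    rw [hu]
    have hden : xs ^ p + ((b:ℝ)-1) * xs ^ p = b * xs ^ p := by ring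
    rw [hden]
    have hval : xs ^ p * v / ((b:ℝ) * xs ^ p) = v / b := by
      field_simp
    rw [hval, hxs]
    rw [sub_nonneg, div_le_div_iff₀ (by nlinarith) (by nlinarith)]
    nlinarith [mul_nonneg (mul_nonneg hv.le (show (0:ℝ) ≤ b by nlinarith)) (sub_nonneg.mpr hba')]
  · rw [hu]
    have hpne : (a:ℝ)/((a:ℝ)-1) ≠ 0 := by
      apply div_ne_zero <;> nlinarith
    rw [Real.zero_rpow hpne]
    simp
end

section
/- Suppose n ≥ 3 and fix distinct contestants i, j, k with v_i = max_l v_l =: m. Let f be the CSF with: f_i(x) = 1 if x_i = m; f_j(x) = 1 if x_i ≠ m and x_j > 0; f_k(x) = 1 if x_i ≠ m and x_j = 0. Then the effort tuple x* with x*_i = m and x*_l = 0 for all l ≠ i is a Nash equilibrium, and it is the unique Nash equilibrium of the contest game; consequently in every Nash equilibrium the aggregate effort equals m. -/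
open Finset

noncomputable def payoff {N : Type*} (f : (N → ℝ) → N → ℝ) (v : N → ℝ)
    (x : N → ℝ) (i : N) : ℝ := f x i * v i - x i

/-- Pure-strategy Nash equilibrium of the contest game with strategy sets ℝ≥0. -/
def IsNash {N : Type*} [DecidableEq N] (f : (N → ℝ) → N → ℝ) (v : N → ℝ)
    (x : N → ℝ) : Prop :=
  (∀ i, 0 ≤ x i) ∧
  ∀ i : N, ∀ y : ℝ, 0 ≤ y →
    payoff f v (Function.update x i y) i ≤ payoff f v x i

/-- `f` is a contest success function: on nonnegative effort tuples it returns a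
probability vector over contestants. -/
def IsCSF {N : Type*} [Fintype N] (f : (N → ℝ) → N → ℝ) : Prop :=
  ∀ x : N → ℝ, (∀ i, 0 ≤ x i) →
    (∀ i, 0 ≤ f x i) ∧ ∑ i, f x i = 1

lemma csf_zero_of_one {N : Type*} [Fintype N] [DecidableEq N]
    {f : (N → ℝ) → N → ℝ} (hf : IsCSF f) {x : N → ℝ} (hx : ∀ l, 0 ≤ x l)
    {a b : N} (hab : b ≠ a) (ha : f x a = 1) : f x b = 0 := by
  obtain ⟨hnn, hsum⟩ := hf x hx
  have hadd : f x a + ∑ l ∈ univ.erase a, f x l = ∑ l, f x l :=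
    Finset.add_sum_erase univ (f x) (mem_univ a)
  have h0 : ∑ l ∈ univ.erase a, f x l = 0 := by linarith
  exact (Finset.sum_eq_zero_iff_of_nonneg (fun l _ => hnn l)).mp h0 b
    (by simp [hab])

theorem stmt_4 {N : Type*} [Fintype N] [DecidableEq N]
    (hcard : 3 ≤ Fintype.card N)
    (hne : (Finset.univ : Finset N).Nonempty)
    (v : N → ℝ) (hv : ∀ l, 0 < v l)
    (m : ℝ) (hm : m = Finset.univ.sup' hne v)
    (i j k : N) (hij : i ≠ j) (hik : i ≠ k) (hjk : j ≠ k)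
    (hvi : v i = m)
    (f : (N → ℝ) → N → ℝ) (hf : IsCSF f)
    (hf1 : ∀ x : N → ℝ, (∀ l, 0 ≤ x l) → x i = m → f x i = 1)
    (hf2 : ∀ x : N → ℝ, (∀ l, 0 ≤ x l) → x i ≠ m → 0 < x j → f x j = 1)
    (hf3 : ∀ x : N → ℝ, (∀ l, 0 ≤ x l) → x i ≠ m → x j = 0 → f x k = 1)
    (xs : N → ℝ) (hxs : xs = fun l => if l = i then m else 0) :
    IsNash f v xs ∧ (∀ x : N → ℝ, IsNash f v x → x = xs) ∧
      (∀ x : N → ℝ, IsNash f v x → ∑ l, x l = m) := by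
  have hm0 : 0 < m := hvi ▸ hv i
  have hxsnn : ∀ l, 0 ≤ xs l := by
    intro l; subst hxs; by_cases h : l = i <;> simp [h, hm0.le]
  have hxsi : xs i = m := by simp [hxs]
  have hxsj : ∀ l, l ≠ i → xs l = 0 := by intro l hl; simp [hxs, hl]
  -- payoff of every player at xs is 0 (for i: m - m; for others: f = 0, x = 0)
  have hfxs : f xs i = 1 := hf1 xs hxsnn hxsi
  have hpay : ∀ l, payoff f v xs l = 0 := by
    intro l
    by_cases hl : l = i
    · subst hl; simp [payoff, hfxs, hvi, hxsi]
    · have := csf_zero_of_one hf hxsnn hl hfxs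
      simp [payoff, this, hxsj l hl]
  have hNash : IsNash f v xs := by
    refine ⟨hxsnn, ?_⟩
    intro l y hy
    rw [hpay l]
    set z := Function.update xs l y with hz
    have hznn : ∀ t, 0 ≤ z t := by
      intro t; by_cases ht : t = l <;> simp [hz, ht, hy, hxsnn t]
    by_cases hl : l = i
    · subst hl
      by_cases hym : y = m
      · subst hym
        have h1 : f (Function.update xs l y) l = 1 := hf1 _ hznn (by simp)
        simp [payoff, hz, h1, hvi]
      · have hzi : z l ≠ m := by simpa [hz] using hym
        have hzj : z j = 0 := by simp [hz, Ne.symm hij, hxsj j (Ne.symm hij)]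
        have hk : f z k = 1 := hf3 z hznn hzi hzj
        have : f z l = 0 := csf_zero_of_one hf hznn hik hk
        simp only [payoff, this]
        simp [hz, hy]
    · have hzi : z i = m := by simp [hz, Ne.symm hl, hxsi]
      have : f z i = 1 := hf1 z hznn hzi
      have hzl : f z l = 0 := csf_zero_of_one hf hznn hl this
      simp only [payoff, hzl]
      simp [hz, hy]
  have huniq : ∀ x : N → ℝ, IsNash f v x → x = xs := by
    intro x hx
    obtain ⟨hnn, hbest⟩ := hx
    have hxi : x i = m := by
      by_contra hxi
      by_cases hxj : 0 < x j
      · -- j deviates to x j / 2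
        have h1 : f x j = 1 := hf2 x hnn hxi hxj
        set z := Function.update x j (x j / 2) with hz
        have hznn : ∀ t, 0 ≤ z t := by
          intro t
          rcases eq_or_ne t j with rfl | ht
          · simp [hz]; linarith
          · simp [hz, ht, hnn t]
        have hzi : z i ≠ m := by simpa [hz, hij] using hxi
        have hzj : f z j = 1 := hf2 z hznn hzi (by simp [hz]; linarith)
        have := hbest j (x j / 2) (by linarith)
        rw [← hz] at this
        simp only [payoff, h1, hzj, one_mul, hz] at this
        simp at this
        rw [← hz, hzj] at this
        linarith
      · have hxj0 : x j = 0 := le_antisymm (not_lt.mp hxj) (hnn j)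
        have h1 : f x k = 1 := hf3 x hnn hxi hxj0
        have hfj : f x j = 0 := csf_zero_of_one hf hnn hjk h1
        set z := Function.update x j (v j / 2) with hz
        have hvj := hv j
        have hznn : ∀ t, 0 ≤ z t := by
          intro t; by_cases ht : t = j <;> simp [hz, ht, hnn t]; linarith
        have hzi : z i ≠ m := by simpa [hz, hij] using hxi
        have hzj : f z j = 1 := hf2 z hznn hzi (by simp [hz]; linarith)
        have := hbest j (v j / 2) (by linarith)
        rw [← hz] at this
        simp only [payoff, hfj, hzj, one_mul, zero_mul, hz] at this
        simp [hxj0] at this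
        rw [← hz, hzj] at this
        linarith
    -- now x i = m, show x l = 0 for l ≠ i
    have hfx : f x i = 1 := hf1 x hnn hxi
    funext l
    by_cases hl : l = i
    · subst hl; simp [hxi, hxs]
    · have hfl : f x l = 0 := csf_zero_of_one hf hnn hl hfx
      set z := Function.update x l 0 with hz
      have hznn : ∀ t, 0 ≤ z t := by
        intro t; by_cases ht : t = l <;> simp [hz, ht, hnn t]
      have hzi : z i = m := by simp [hz, Ne.symm hl, hxi]
      have hfz : f z i = 1 := hf1 z hznn hzi
      have hfzl : f z l = 0 := csf_zero_of_one hf hznn hl hfz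
      have := hbest l 0 le_rfl
      rw [← hz] at this
      simp only [payoff, hfl, hfzl, zero_mul, hz] at this
      simp at this
      rw [← hz, hfzl] at this
      have : x l = 0 := le_antisymm (by linarith) (hnn l)
      simp [this, hxs, hl]
  refine ⟨hNash, huniq, ?_⟩
  intro x hx
  rw [huniq x hx, hxs]
  rw [Finset.sum_ite_eq' univ i (fun _ => m)]
  simp
end

section
/- Suppose n = 2 and v_i > v_j (heterogeneous values). Let f be the CSF with f_i(x) = 𝟙[x_i = v_i] (and f_j(x) = 1 − f_i(x)). Then the tuple x* with x*_i = v_i and x*_j = 0 is a Nash equilibrium with aggregate effort equal to v_i = max value. -/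
open Finset

theorem stmt_6 {N : Type*} [Fintype N] [DecidableEq N]
    (hcard : Fintype.card N = 2)
    (i j : N) (hij : i ≠ j)
    (v : N → ℝ) (hvj : 0 < v j) (hvij : v j < v i)
    (f : (N → ℝ) → N → ℝ) (hf : IsCSF f)
    (hfi : ∀ x : N → ℝ, (∀ l, 0 ≤ x l) → f x i = if x i = v i then 1 else 0)
    (hfj : ∀ x : N → ℝ, (∀ l, 0 ≤ x l) → f x j = 1 - f x i)
    (xs : N → ℝ) (hxs : xs = fun l => if l = i then v i else 0) :
    IsNash f v xs ∧ ∑ l, xs l = v i := by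
  have hvi : 0 < v i := hvj.trans hvij
  have hxnn : ∀ l, 0 ≤ xs l := by
    intro l; rw [hxs]; dsimp only
    split <;> [exact hvi.le; exact le_rfl]
  have huniv : (univ : Finset N) = {i, j} := by
    symm
    apply eq_of_subset_of_card_le (subset_univ _)
    rw [card_univ, hcard, card_insert_of_notMem (by simp [hij]), card_singleton]
  have hall : ∀ l : N, l = i ∨ l = j := by
    intro l
    have : l ∈ ({i, j} : Finset N) := huniv ▸ mem_univ l
    simpa using this
  have hxi : xs i = v i := by rw [hxs]; simp
  have hxj : xs j = 0 := by rw [hxs]; simp [hij.symm]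
  constructor
  · refine ⟨hxnn, ?_⟩
    intro k y hy
    have hfx_i : f xs i = 1 := by rw [hfi xs hxnn, hxi, if_pos rfl]
    rcases hall k with rfl | rfl
    · -- deviation by i
      have hnn : ∀ l, 0 ≤ Function.update xs k y l := by
        intro l
        rcases eq_or_ne l k with rfl | h
        · simpa using hy
        · rw [Function.update_of_ne h]; exact hxnn l
      have hfu : f (Function.update xs k y) k =
          if y = v k then 1 else 0 := by
        rw [hfi _ hnn, Function.update_self]
      unfold payoff
      rw [hfu, hfx_i, hxi, Function.update_self]
      split
      · next h => rw [h]
      · nlinarith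
    · -- deviation by j
      have hnn : ∀ l, 0 ≤ Function.update xs k y l := by
        intro l
        rcases eq_or_ne l k with rfl | h
        · simpa using hy
        · rw [Function.update_of_ne h]; exact hxnn l
      have hui : Function.update xs k y i = v i :=
        by rw [Function.update_of_ne hij, hxi]
      have hfui : f (Function.update xs k y) i = 1 := by
        rw [hfi _ hnn, hui, if_pos rfl]
      have hfuk : f (Function.update xs k y) k = 0 := by
        rw [hfj _ hnn, hfui]; ring
      have hfxk : f xs k = 0 := by rw [hfj xs hxnn, hfx_i]; ring
      unfold payoff
      rw [hfuk, hfxk, hxj, Function.update_self]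
      linarith
  · rw [huniv, sum_insert (by simp [hij]), sum_singleton, hxi, hxj, add_zero]
end

section
/- Suppose n = 2 and v_i > v_j. For every CSF f: if there exists a Nash equilibrium with aggregate effort equal to v_i, then the all-zero effort tuple is also a Nash equilibrium (which has aggregate effort 0 ≠ v_i). Hence no CSF is strictly extractive: no CSF has the property that some equilibrium achieves aggregate effort v_i and every equilibrium achieves aggregate effort v_i. -/
open Finset

theorem stmt_7 {N : Type*} [Fintype N] [DecidableEq N]
    (hcard : Fintype.card N = 2)
    (i j : N) (hij : i ≠ j)
    (v : N → ℝ) (hvj : 0 < v j) (hvij : v j < v i)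
    (f : (N → ℝ) → N → ℝ) (hf : IsCSF f) :
    ((∃ x : N → ℝ, IsNash f v x ∧ ∑ l, x l = v i) → IsNash f v (fun _ => 0)) ∧
      ¬ ((∃ x : N → ℝ, IsNash f v x ∧ ∑ l, x l = v i) ∧
          (∀ x : N → ℝ, IsNash f v x → ∑ l, x l = v i)) := by
  have huniv : (Finset.univ : Finset N) = {i, j} := by
    refine (Finset.eq_univ_of_card _ ?_).symm
    rw [Finset.card_pair hij, hcard]
  have hall : ∀ k : N, k = i ∨ k = j := by
    intro k
    have hk : k ∈ (Finset.univ : Finset N) := Finset.mem_univ k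
    rw [huniv] at hk
    simpa using hk
  have main : (∃ x : N → ℝ, IsNash f v x ∧ ∑ l, x l = v i) →
      IsNash f v (fun _ => 0) := by
    rintro ⟨x, ⟨hx0, hxN⟩, hsum⟩
    rw [huniv, Finset.sum_pair hij] at hsum
    have hvk : ∀ k, 0 < v k := by
      intro k; rcases hall k with rfl | rfl
      · exact hvj.trans hvij
      · exact hvj
    have hdev0 : ∀ k, x k ≤ f x k * v k := by
      intro k
      have h := hxN k 0 le_rfl
      have hnn : ∀ l, 0 ≤ Function.update x k 0 l := by
        intro l
        rcases eq_or_ne l k with rfl | hl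
        · simp
        · rw [Function.update_of_ne hl]; exact hx0 l
      have hfk := (hf _ hnn).1 k
      have h0 : 0 ≤ payoff f v (Function.update x k 0) k := by
        simp only [payoff, Function.update_self, sub_zero]
        exact mul_nonneg hfk (hvk k).le
      have := h0.trans h
      simp only [payoff] at this
      linarith
    have hfx := hf x hx0
    have hfxsum : f x i + f x j = 1 := by
      have := hfx.2
      rwa [huniv, Finset.sum_pair hij] at this
    have hfxj : f x j = 0 := by
      refine le_antisymm ?_ (hfx.1 j)
      nlinarith [hdev0 i, hdev0 j]
    have hxj : x j = 0 := by
      have := hdev0 j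
      rw [hfxj] at this
      have := hx0 j
      linarith
    have hxi : x i = v i := by linarith
    have hfxi : f x i = 1 := by linarith
    have key : ∀ y : ℝ, 0 ≤ y → f (Function.update x i y) i * v i - y ≤ 0 := by
      intro y hy
      have h := hxN i y hy
      simp only [payoff, Function.update_self] at h
      rw [hfxi, hxi] at h
      linarith
    have hupd : ∀ y : ℝ, Function.update x i y =
        Function.update (fun _ : N => 0) i y := by
      intro y
      funext l
      rcases hall l with rfl | rfl
      · simp
      · rw [Function.update_of_ne hij.symm, Function.update_of_ne hij.symm, hxj]
    have hzero0 : Function.update (fun _ : N => (0:ℝ)) i 0 = (fun _ : N => (0:ℝ)) := by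
      funext l
      rcases eq_or_ne l i with rfl | hl
      · simp
      · rw [Function.update_of_ne hl]
    have hf0 := hf (fun _ : N => 0) (fun _ => le_rfl)
    have hf0i : f (fun _ : N => 0) i = 0 := by
      have h := key 0 le_rfl
      rw [hupd 0] at h
      simp only [hzero0] at h
      have := hf0.1 i
      nlinarith [hvk i]
    refine ⟨fun _ => le_rfl, ?_⟩
    intro k y hy
    rcases hall k with rfl | rfl
    · simp only [payoff, Function.update_self]
      rw [← hupd y, hf0i]
      have := key y hy
      linarith
    · simp only [payoff, Function.update_self]
      set z := Function.update (fun _ : N => (0:ℝ)) k y with hz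
      have hznn : ∀ l, 0 ≤ z l := by
        intro l
        rcases eq_or_ne l k with rfl | hl
        · simpa [hz] using hy
        · rw [hz, Function.update_of_ne hl]
      have hfz := hf z hznn
      have hfzsum : f z i + f z k = 1 := by
        have := hfz.2
        rwa [huniv, Finset.sum_pair hij] at this
      have hfzj1 : f z k ≤ 1 := by
        have := hfz.1 i; linarith
      have hf0j : f (fun _ : N => 0) k = 1 := by
        have hs : f (fun _ : N => 0) i + f (fun _ : N => 0) k = 1 := by
          have := hf0.2
          rwa [huniv, Finset.sum_pair hij] at this
        linarith
      rw [hf0j]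
      nlinarith [hvk k]
  constructor
  · exact main
  · rintro ⟨hex, hall'⟩
    have hz := main hex
    have h0 := hall' _ hz
    simp only [Finset.sum_const_zero] at h0
    have : 0 < v i := hvj.trans hvij
    linarith
end

section
/- In the two-heterogeneous-value case (v_i > v_j), for any CSF f and any Nash equilibrium x* with x*_i + x*_j = v_i, it must hold that f_j(x*) = 0, x*_j = 0, x*_i = v_i, and f_i(x*) = 1. -/
open Finset

theorem stmt_8 {N : Type*} [Fintype N] [DecidableEq N]
    (hcard : Fintype.card N = 2)
    (i j : N) (hij : i ≠ j)
    (v : N → ℝ) (hvj : 0 < v j) (hvij : v j < v i)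
    (f : (N → ℝ) → N → ℝ) (hf : IsCSF f)
    (x : N → ℝ) (hx : IsNash f v x) (hsum : x i + x j = v i) :
    f x j = 0 ∧ x j = 0 ∧ x i = v i ∧ f x i = 1 := by
  obtain ⟨hx0, hNE⟩ := hx
  obtain ⟨hfpos, hfsum⟩ := hf x hx0
  -- deviation to 0 gives nonnegative payoff, hence payoff at x is nonneg
  have hdev : ∀ k : N, 0 ≤ v k → x k ≤ f x k * v k := by
    intro k hvk
    have h := hNE k 0 le_rfl
    have hup : ∀ l, 0 ≤ Function.update x k 0 l := by
      intro l
      rcases eq_or_ne l k with rfl | h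
      · simp
      · simpa [Function.update_of_ne h] using hx0 l
    have hdf := (hf _ hup).1 k
    have hupk : Function.update x k 0 k = 0 := by simp
    unfold payoff at h
    rw [hupk] at h
    nlinarith [mul_nonneg hdf hvk]
  have hi := hdev i (by linarith)
  have hj := hdev j (by linarith)
  -- univ = {i, j}
  have huniv : (Finset.univ : Finset N) = {i, j} := by
    apply (Finset.eq_of_subset_of_card_le (Finset.subset_univ _) _).symm
    rw [Finset.card_univ, hcard, Finset.card_insert_of_notMem (by simpa using hij),
      Finset.card_singleton]
  have hsum2 : f x i + f x j = 1 := by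
    rw [← hfsum, huniv, Finset.sum_pair hij]
  have hfj0 : f x j = 0 := by nlinarith [hfpos j, hx0 j]
  have hxj0 : x j = 0 := by nlinarith [hx0 j]
  refine ⟨hfj0, hxj0, by linarith, by linarith⟩
end

section
/- For any CSF f that does not depend on the value tuple, there exists a value tuple v under which f is not extractive: i.e., there is no Nash equilibrium of the contest (f, v) whose aggregate effort equals the maximum value. -/
open Finset

theorem stmt_9 {N : Type*} [Fintype N] [DecidableEq N]
    (hcard : 2 ≤ Fintype.card N)
    (hne : (Finset.univ : Finset N).Nonempty)
    (f : (N → ℝ) → N → ℝ) (hf : IsCSF f) :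
    ∃ v : N → ℝ, (∀ i, 0 < v i) ∧
      ¬ ∃ x : N → ℝ, IsNash f v x ∧ ∑ i, x i = Finset.univ.sup' hne v := by
  obtain ⟨h0nn, h0sum⟩ := hf (fun _ => 0) (fun i => le_refl 0)
  -- find j with f 0 j > 0
  have hj : ∃ j : N, 0 < f (fun _ => 0) j := by
    by_contra h
    push_neg at h
    have : ∑ i, f (fun _ => 0) i ≤ 0 := Finset.sum_nonpos (fun i _ => h i)
    linarith [h0sum]
  obtain ⟨j, hjpos⟩ := hj
  set v : N → ℝ := fun i => if i = j then 2 else 1 with hv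
  have hvpos : ∀ i, 0 < v i := by
    intro i; simp only [hv]; split <;> norm_num
  have hvle : ∀ i, v i ≤ 2 := by
    intro i; simp only [hv]; split <;> norm_num
  have hvj : v j = 2 := by simp [hv]
  have hsup : Finset.univ.sup' hne v = 2 := by
    apply le_antisymm
    · exact Finset.sup'_le hne v (fun i _ => hvle i)
    · rw [← hvj]; exact Finset.le_sup' v (Finset.mem_univ j)
  refine ⟨v, hvpos, ?_⟩
  rintro ⟨x, ⟨hxnn, hnash⟩, hsum⟩
  rw [hsup] at hsum
  obtain ⟨hfxnn, hfxsum⟩ := hf x hxnn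
  -- Step 1: x i ≤ f x i * v i for all i
  have key : ∀ i, x i ≤ f x i * v i := by
    intro i
    have h := hnash i 0 le_rfl
    have hnn : ∀ k, 0 ≤ Function.update x i 0 k := by
      intro k; rcases eq_or_ne k i with rfl | hk
      · simp
      · simp [Function.update_of_ne hk]; exact hxnn k
    obtain ⟨hupnn, _⟩ := hf (Function.update x i 0) hnn
    have h0 : 0 ≤ f (Function.update x i 0) i * v i :=
      mul_nonneg (hupnn i) (hvpos i).le
    simp only [payoff, Function.update_self] at h
    linarith
  -- Step 2: sum of f x i * v i = 1 + f x j
  have hsumv : ∑ i, f x i * v i = 1 + f x j := by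
    have : ∀ i, f x i * v i = f x i + (if i = j then f x i else 0) := by
      intro i; simp only [hv]; split <;> ring
    rw [Finset.sum_congr rfl (fun i _ => this i), Finset.sum_add_distrib,
      hfxsum, Finset.sum_ite_eq' Finset.univ j (fun i => f x i)]
    simp
  have h2le : (2:ℝ) ≤ 1 + f x j := by
    calc (2:ℝ) = ∑ i, x i := hsum.symm
    _ ≤ ∑ i, f x i * v i := Finset.sum_le_sum (fun i _ => key i)
    _ = 1 + f x j := hsumv
  have hfj1 : f x j = 1 := by
    have hle : f x j ≤ 1 := by
      have := Finset.single_le_sum (fun i _ => hfxnn i) (Finset.mem_univ j)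
      linarith [hfxsum]
    linarith
  -- Step 3: f x i = 0 and x i = 0 for i ≠ j
  have hxi0 : ∀ i, i ≠ j → x i = 0 := by
    intro i hij
    have hrest : ∑ k ∈ Finset.univ.erase j, f x k = 0 := by
      have := Finset.add_sum_erase Finset.univ (f x) (Finset.mem_univ j)
      rw [hfxsum, hfj1] at this; linarith
    have hfi0 : f x i = 0 := by
      have hnn : ∀ k ∈ Finset.univ.erase j, 0 ≤ f x k := fun k _ => hfxnn k
      have := (Finset.sum_eq_zero_iff_of_nonneg hnn).mp hrest i
        (Finset.mem_erase.mpr ⟨hij, Finset.mem_univ i⟩)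
      exact this
    have := key i
    rw [hfi0, zero_mul] at this
    linarith [hxnn i]
  have hxj : x j = 2 := by
    have := Finset.add_sum_erase Finset.univ x (Finset.mem_univ j)
    rw [hsum] at this
    have hrest : ∑ k ∈ Finset.univ.erase j, x k = 0 :=
      Finset.sum_eq_zero (fun k hk => hxi0 k (Finset.mem_erase.mp hk).1)
    linarith
  -- Step 4: player j deviates to 0
  have hupd : Function.update x j 0 = (fun _ => 0) := by
    funext k
    rcases eq_or_ne k j with rfl | hk
    · simp
    · simp [Function.update_of_ne hk, hxi0 k hk]
  have h := hnash j 0 le_rfl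
  simp only [payoff, hupd] at h
  rw [hfj1, hxj, hvj] at h
  nlinarith [hjpos]
end

section
/- If f is a fixed CSF and, for two value tuples v and w with unique maximizers at the same contestant i where v_i = 1 and w_i = 2, the equilibria x* ∈ E^{fv} and y* ∈ E^{fw} satisfy full extraction (∑ x* = 1, ∑ y* = 2), then x*_i = 1, y*_i = 2, all other components are 0, and f_i(x*) = f_i(y*) = 1; this yields a contradiction because deviating to effort 1 in the game with value tuple w gives contestant i payoff 1 > 0 = u_i^{fw}(y*). -/
open Finset

lemma full_extract_aux {N : Type*} [Fintype N] [DecidableEq N]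
    (f : (N → ℝ) → N → ℝ) (hf : IsCSF f) (i : N)
    (v : N → ℝ) (hv : ∀ l, 0 < v l)
    (hvmax : ∀ l, l ≠ i → v l < v i)
    (x : N → ℝ) (hx : IsNash f v x)
    (hxsum : ∑ l, x l = v i) :
    x i = v i ∧ (∀ l, l ≠ i → x l = 0) ∧ f x i = 1 := by
  obtain ⟨hxnn, hnash⟩ := hx
  have hfx := hf x hxnn
  have hterm : ∀ j, x j ≤ f x j * v j := by
    intro j
    have h0 := hnash j 0 le_rfl
    have hup : ∀ l, 0 ≤ Function.update x j 0 l := by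
      intro l; rcases eq_or_ne l j with rfl | h
      · simp
      · simp [Function.update_of_ne h, hxnn l]
    have hfn := (hf _ hup).1 j
    have hpos : 0 ≤ payoff f v (Function.update x j 0) j := by
      simp only [payoff, Function.update_self, sub_zero]
      exact mul_nonneg hfn (hv j).le
    have := hpos.trans h0
    simp only [payoff] at this
    linarith
  have hterm2 : ∀ j, f x j * v j ≤ f x j * v i := by
    intro j
    rcases eq_or_ne j i with rfl | h
    · exact le_rfl
    · exact mul_le_mul_of_nonneg_left (hvmax j h).le (hfx.1 j)
  have hsum2 : ∑ j, f x j * v i = v i := by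
    rw [← Finset.sum_mul, hfx.2, one_mul]
  have e1 : ∑ j, x j ≤ ∑ j, f x j * v j := Finset.sum_le_sum fun j _ => hterm j
  have e2 : ∑ j, f x j * v j ≤ ∑ j, f x j * v i := Finset.sum_le_sum fun j _ => hterm2 j
  have eqA : ∑ j, x j = ∑ j, f x j * v j :=
    le_antisymm e1 (by rw [hxsum, ← hsum2]; exact e2)
  have eqB : ∑ j, f x j * v j = ∑ j, f x j * v i :=
    le_antisymm e2 (by rw [hsum2, ← hxsum, ← eqA])
  have hA : ∀ j ∈ Finset.univ, x j = f x j * v j :=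
    (Finset.sum_eq_sum_iff_of_le (fun j _ => hterm j)).mp eqA
  have hB : ∀ j ∈ Finset.univ, f x j * v j = f x j * v i :=
    (Finset.sum_eq_sum_iff_of_le (fun j _ => hterm2 j)).mp eqB
  have hzero : ∀ l, l ≠ i → f x l = 0 := by
    intro l hl
    have h := hB l (Finset.mem_univ l)
    have hne : v i - v l ≠ 0 := sub_ne_zero.mpr (hvmax l hl).ne'
    have : f x l * (v i - v l) = 0 := by ring_nf; linarith [h]
    rcases mul_eq_zero.mp this with h' | h'
    · exact h'
    · exact absurd h' hne
  have hxl : ∀ l, l ≠ i → x l = 0 := by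
    intro l hl
    rw [hA l (Finset.mem_univ l), hzero l hl, zero_mul]
  have hfi : f x i = 1 := by
    rw [← hfx.2, Fintype.sum_eq_single i (fun l hl => hzero l hl)]
  refine ⟨?_, hxl, hfi⟩
  rw [hA i (Finset.mem_univ i), hfi, one_mul]

theorem stmt_10 {N : Type*} [Fintype N] [DecidableEq N]
    (hcard : 2 ≤ Fintype.card N)
    (f : (N → ℝ) → N → ℝ) (hf : IsCSF f)
    (i : N)
    (v w : N → ℝ) (hv : ∀ l, 0 < v l) (hw : ∀ l, 0 < w l)
    (hvi : v i = 1) (hwi : w i = 2)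
    (hvmax : ∀ l, l ≠ i → v l < v i) (hwmax : ∀ l, l ≠ i → w l < w i)
    (x y : N → ℝ) (hx : IsNash f v x) (hy : IsNash f w y)
    (hxsum : ∑ l, x l = 1) (hysum : ∑ l, y l = 2) :
    x i = 1 ∧ y i = 2 ∧ (∀ l, l ≠ i → x l = 0 ∧ y l = 0) ∧
      f x i = 1 ∧ f y i = 1 ∧
      payoff f w (Function.update y i 1) i = 1 ∧ False := by
  obtain ⟨hxi, hxl, hfxi⟩ := full_extract_aux f hf i v hv hvmax x hx (by rw [hvi, hxsum])
  obtain ⟨hyi, hyl, hfyi⟩ := full_extract_aux f hf i w hw hwmax y hy (by rw [hwi, hysum])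
  rw [hvi] at hxi
  rw [hwi] at hyi
  have hupd : Function.update y i 1 = x := by
    funext l
    rcases eq_or_ne l i with rfl | h
    · simp [hxi]
    · simp [Function.update_of_ne h, hyl l h, hxl l h]
  have hpay : payoff f w (Function.update y i 1) i = 1 := by
    simp only [payoff, hupd, Function.update_self, hfxi, hwi]
    norm_num
  refine ⟨hxi, hyi, fun l hl => ⟨hxl l hl, hyl l hl⟩, hfxi, hfyi, hpay, ?_⟩
  have h1 := hy.2 i 1 (by norm_num)
  rw [hpay] at h1
  have : payoff f w y i = 0 := by
    simp only [payoff, hfyi, hwi, hyi]; norm_num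
  linarith [h1, this.le]
end

section
/- Let all n contestants have common value v > 0, and let a be an integer with 2 ≤ a ≤ n. Consider the CSF assigning winning probabilities proportional to x_i^{a/(a−1)} (with uniform probabilities 1/n if all efforts are zero). Then for any subset A ⊆ N with |A| = a, the effort tuple where each i ∈ A exerts v/a and all others exert 0 is a Nash equilibrium, and its aggregate effort equals v. -/
open Finset

lemma aux_bern (a : ℕ) (ha : 2 ≤ a) (s : ℝ) (hs : 0 ≤ s) :
    (a : ℝ) * s ≤ ((a : ℝ) - 1) + s ^ a := by
  have h := one_add_mul_le_pow (a := s - 1) (by linarith) a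
  have e : (1 : ℝ) + (s - 1) = s := by ring
  rw [e] at h
  nlinarith [h]

lemma aux_key (a : ℕ) (ha : 2 ≤ a) (c : ℝ) (hc : 0 < c) (y : ℝ) (hy : 0 < y) :
    (a : ℝ) * c * y ^ ((a:ℝ)/((a:ℝ)-1) - 1) ≤
      ((a:ℝ) - 1) * c ^ ((a:ℝ)/((a:ℝ)-1)) + y ^ ((a:ℝ)/((a:ℝ)-1)) := by
  have ha2 : (2:ℝ) ≤ (a:ℝ) := by exact_mod_cast ha
  have ha1 : (1:ℝ) ≤ (a:ℝ) - 1 := by linarith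
  have ha0 : ((a:ℝ) - 1) ≠ 0 := by linarith
  set R : ℝ := (a:ℝ)/((a:ℝ)-1) with hR
  have hR1 : R - 1 = 1 / ((a:ℝ)-1) := by
    rw [hR]; field_simp; ring
  set s : ℝ := (y / c) ^ (1 / ((a:ℝ)-1)) with hs
  have hs0 : 0 ≤ s := Real.rpow_nonneg (by positivity) _
  have hyc : 0 ≤ y / c := by positivity
  have hy' : y = c * (y / c) := by field_simp
  have h1 : y ^ (R-1) = c ^ (R-1) * s := by
    calc y ^ (R-1) = (c * (y/c)) ^ (R-1) := by rw [← hy']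
    _ = c ^ (R-1) * (y/c) ^ (R-1) := Real.mul_rpow hc.le hyc
    _ = c ^ (R-1) * s := by rw [hR1, hs]
  have h2 : y ^ R = c ^ R * s ^ a := by
    have e1 : s ^ a = (y/c) ^ R := by
      rw [hs, ← Real.rpow_natCast ((y/c) ^ (1/((a:ℝ)-1))) a, ← Real.rpow_mul hyc]
      congr 1
      rw [hR]; field_simp
    calc y ^ R = (c * (y/c)) ^ R := by rw [← hy']
    _ = c ^ R * (y/c) ^ R := Real.mul_rpow hc.le hyc
    _ = c ^ R * s ^ a := by rw [e1]
  have hcR : c ^ R = c * c ^ (R - 1) := by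
    have h := Real.rpow_add hc 1 (R-1)
    rw [Real.rpow_one] at h
    rw [← h]
    congr 1
    ring
  have hcRpos : (0:ℝ) < c ^ R := Real.rpow_pos_of_pos hc R
  have hb := aux_bern a ha s hs0
  rw [h1, h2]
  calc (a:ℝ) * c * (c ^ (R-1) * s) = c ^ R * ((a:ℝ) * s) := by rw [hcR]; ring
  _ ≤ c ^ R * (((a:ℝ)-1) + s ^ a) := mul_le_mul_of_nonneg_left hb hcRpos.le
  _ = ((a:ℝ)-1) * c ^ R + c ^ R * s ^ a := by ring

theorem stmt_11 {N : Type*} [Fintype N] [DecidableEq N]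
    (n : ℕ) (hn : Fintype.card N = n)
    (v : ℝ) (hv : 0 < v)
    (a : ℕ) (ha2 : 2 ≤ a) (han : a ≤ n)
    (f : (N → ℝ) → N → ℝ)
    (hfdef : ∀ x : N → ℝ, (∀ l, 0 ≤ x l) → ∀ i : N,
      f x i = if ∃ j, 0 < x j
        then x i ^ ((a : ℝ) / ((a : ℝ) - 1)) / ∑ j, x j ^ ((a : ℝ) / ((a : ℝ) - 1))
        else 1 / (n : ℝ))
    (A : Finset N) (hA : A.card = a)
    (xs : N → ℝ) (hxs : xs = fun i => if i ∈ A then v / a else 0) :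
    IsNash f (fun _ => v) xs ∧ ∑ i, xs i = v := by
  have haR : (2:ℝ) ≤ (a:ℝ) := by exact_mod_cast ha2
  have ha0 : (a:ℝ) ≠ 0 := by linarith
  set R : ℝ := (a:ℝ)/((a:ℝ)-1) with hR
  have hRpos : 0 < R := by rw [hR]; exact div_pos (by linarith) (by linarith)
  set c : ℝ := v / a with hc
  have hcpos : 0 < c := by rw [hc]; positivity
  have hcRpos : (0:ℝ) < c ^ R := Real.rpow_pos_of_pos hcpos R
  have hxsnn : ∀ l, 0 ≤ xs l := by
    intro l; rw [hxs]; dsimp only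
    split
    · exact hcpos.le
    · exact le_refl 0
  have hsum : ∑ i, xs i = v := by
    rw [hxs, Finset.sum_ite_mem, Finset.univ_inter, Finset.sum_const, hA, nsmul_eq_mul, hc]
    field_simp
  have hxR : ∀ j, xs j ^ R = if j ∈ A then c ^ R else 0 := by
    intro j; rw [hxs]; dsimp only
    split
    · rfl
    · exact Real.zero_rpow (ne_of_gt hRpos)
  have hSxs : ∑ j, xs j ^ R = (a:ℝ) * c ^ R := by
    calc ∑ j, xs j ^ R = ∑ j, (if j ∈ A then c ^ R else 0) :=
      Finset.sum_congr rfl (fun j _ => hxR j)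
    _ = (a:ℝ) * c ^ R := by
      rw [Finset.sum_ite_mem, Finset.univ_inter, Finset.sum_const, hA, nsmul_eq_mul]
  have hApos : ∃ j, 0 < xs j := by
    have hne : A.Nonempty := by rw [← Finset.card_pos, hA]; omega
    obtain ⟨j, hj⟩ := hne
    refine ⟨j, ?_⟩
    rw [hxs]; dsimp only; rw [if_pos hj]; exact hcpos
  have hfxs : ∀ i, f xs i = if i ∈ A then 1 / (a:ℝ) else 0 := by
    intro i
    rw [hfdef xs hxsnn i, if_pos hApos, hSxs, hxR i]
    split_ifs with h
    · rw [div_eq_div_iff (by positivity) (by positivity)]; ring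
    · exact zero_div _
  refine ⟨⟨hxsnn, ?_⟩, hsum⟩
  intro i y hy
  set u := Function.update xs i y with hu
  have hunn : ∀ l, 0 ≤ u l := by
    intro l; rw [hu]
    rcases eq_or_ne l i with h | h
    · rw [h, Function.update_self]; exact hy
    · rw [Function.update_of_ne h]; exact hxsnn l
  obtain ⟨j, hjA, hjne⟩ := Finset.exists_mem_ne (by omega : 1 < A.card) i
  have hex : ∃ l, 0 < u l := by
    refine ⟨j, ?_⟩
    rw [hu, Function.update_of_ne hjne, hxs]
    dsimp only; rw [if_pos hjA]; exact hcpos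
  -- payoff at xs
  have hpxs : payoff f (fun _ => v) xs i = 0 := by
    simp only [payoff, hfxs i]
    rw [hxs]; dsimp only
    split_ifs with h
    · rw [hc]; field_simp; ring
    · ring
  rw [hpxs]
  -- sum of rpows at u
  set m : ℝ := if i ∈ A then (a:ℝ) - 1 else (a:ℝ) with hm
  have hm1 : (a:ℝ) - 1 ≤ m := by rw [hm]; split <;> linarith
  have hmpos : 0 < m := by linarith
  have hfun : (fun l => u l ^ R) = Function.update (fun l => xs l ^ R) i (y ^ R) := by
    funext l
    rcases eq_or_ne l i with h | h
    · rw [h, hu, Function.update_self, Function.update_self]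
    · rw [hu, Function.update_of_ne h, Function.update_of_ne h]
  have hSu : ∑ l, u l ^ R = y ^ R + m * c ^ R := by
    calc ∑ l, u l ^ R
        = ∑ l, Function.update (fun l => xs l ^ R) i (y ^ R) l := by rw [hfun]
    _ = y ^ R + ∑ l ∈ Finset.univ \ {i}, xs l ^ R := by
        exact Finset.sum_update_of_mem (Finset.mem_univ i) _ _
    _ = y ^ R + m * c ^ R := by
        rw [Finset.sum_sdiff_eq_sub (Finset.subset_univ {i}), Finset.sum_singleton,
          hSxs, hxR i, hm]
        split_ifs with h
        · ring
        · ring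
  have hyRnn : 0 ≤ y ^ R := Real.rpow_nonneg hy R
  have hDpos : 0 < y ^ R + m * c ^ R := by positivity
  have hfu : f u i = y ^ R / (y ^ R + m * c ^ R) := by
    rw [hfdef u hunn i, if_pos hex, hSu, hu, Function.update_self]
  simp only [payoff, hfu]
  rw [hu, Function.update_self]
  -- goal : y ^ R / (y ^ R + m * c ^ R) * v - y ≤ 0
  rcases eq_or_lt_of_le hy with h0 | h0
  · rw [← h0, Real.zero_rpow (ne_of_gt hRpos)]
    simp
  · have key := aux_key a ha2 c hcpos y h0
    have hvac : v = (a:ℝ) * c := by rw [hc]; field_simp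
    have key2 : v * y ^ (R - 1) ≤ m * c ^ R + y ^ R := by
      rw [hvac]
      calc (a:ℝ) * c * y ^ (R-1) ≤ ((a:ℝ) - 1) * c ^ R + y ^ R := key
      _ ≤ m * c ^ R + y ^ R := by nlinarith [hcRpos]
    have hsplit : y ^ (R - 1) * y = y ^ R := by
      have h := Real.rpow_add h0 (R-1) 1
      rw [Real.rpow_one] at h
      rw [← h]
      congr 1
      ring
    rw [sub_nonpos, div_mul_eq_mul_div, div_le_iff₀ hDpos]
    calc y ^ R * v = (v * y ^ (R-1)) * y := by rw [← hsplit]; ring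
    _ ≤ (m * c ^ R + y ^ R) * y := by
        exact mul_le_mul_of_nonneg_right key2 hy
    _ = y * (y ^ R + m * c ^ R) := by ring
end

section
/- Under the proportional-power CSF with exponent a/(a−1) = 2 (i.e., a = 2) and common value v > 0, every Nash equilibrium has aggregate effort exactly v; moreover, the Nash equilibria are exactly the tuples where two contestants each exert v/2 and all others exert 0. -/
open Finset

set_option maxHeartbeats 1000000

lemma aux_sum_update_sq {N : Type*} [Fintype N] [DecidableEq N] (x : N → ℝ) (i : N) (y : ℝ) :
    ∑ j, (Function.update x i y j) ^ 2
      = y ^ 2 + ∑ j ∈ Finset.univ.erase i, x j ^ 2 := by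
  have h : (fun j => (Function.update x i y j) ^ 2)
      = Function.update (fun j => x j ^ 2) i (y ^ 2) := by
    funext j
    by_cases hj : j = i <;> simp [Function.update_apply, hj]
  rw [h, Finset.sum_update_of_mem (Finset.mem_univ i), ← Finset.sdiff_singleton_eq_erase]

lemma aux_sum_sq_split {N : Type*} [Fintype N] [DecidableEq N] (x : N → ℝ) (i : N) :
    ∑ j, x j ^ 2 = x i ^ 2 + ∑ j ∈ Finset.univ.erase i, x j ^ 2 :=
  (Finset.add_sum_erase _ _ (Finset.mem_univ i)).symm

lemma aux_foc (v T x : ℝ) (hT : 0 < T) (hx : 0 < x)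
    (h : ∀ y, 0 ≤ y → v * y ^ 2 / (y ^ 2 + T) - y ≤ v * x ^ 2 / (x ^ 2 + T) - x) :
    2 * v * x * T = (x ^ 2 + T) ^ 2 := by
  set g : ℝ → ℝ := fun y => v * y ^ 2 / (y ^ 2 + T) - y with hg
  have hd : ∀ y : ℝ, HasDerivAt g (2 * v * y * T / (y ^ 2 + T) ^ 2 - 1) y := by
    intro y
    have hne : y ^ 2 + T ≠ 0 := by positivity
    have h1 : HasDerivAt (fun y : ℝ => v * y ^ 2) (v * (2 * y ^ 1)) y :=
      (hasDerivAt_pow 2 y).const_mul v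
    have h2 : HasDerivAt (fun y : ℝ => y ^ 2 + T) (2 * y ^ 1) y := by
      simpa using (hasDerivAt_pow 2 y).add_const T
    have := (h1.div h2 hne).sub (hasDerivAt_id y)
    refine this.congr_deriv ?_
    field_simp
    ring
  have hmax : IsLocalMax g x := by
    filter_upwards [eventually_gt_nhds hx] with y hy
    exact h y hy.le
  have h0 := hmax.hasDerivAt_eq_zero (hd x)
  have hne : (x ^ 2 + T) ^ 2 ≠ 0 := by positivity
  field_simp at h0
  linarith

theorem stmt_12 {N : Type*} [Fintype N] [DecidableEq N]
    (n : ℕ) (hn : Fintype.card N = n) (hn2 : 2 ≤ n)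
    (v : ℝ) (hv : 0 < v)
    (f : (N → ℝ) → N → ℝ)
    (hfdef : ∀ x : N → ℝ, (∀ l, 0 ≤ x l) → ∀ i : N,
      f x i = if ∃ j, 0 < x j then x i ^ 2 / ∑ j, x j ^ 2 else 1 / (n : ℝ)) :
    (∀ x : N → ℝ, IsNash f (fun _ => v) x → ∑ i, x i = v) ∧
      (∀ x : N → ℝ, IsNash f (fun _ => v) x ↔
        ∃ A : Finset N, A.card = 2 ∧ ∀ i, x i = if i ∈ A then v / 2 else 0) := by
  have key : ∀ x : N → ℝ, IsNash f (fun _ => v) x ↔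
      ∃ A : Finset N, A.card = 2 ∧ ∀ i, x i = if i ∈ A then v / 2 else 0 := by
    intro x
    constructor
    · -- forward direction
      rintro ⟨hx0, hbest⟩
      set S := ∑ j, x j ^ 2 with hSdef
      set T : N → ℝ := fun i => ∑ j ∈ Finset.univ.erase i, x j ^ 2 with hTdef
      have hS' : ∀ i, S = x i ^ 2 + T i := fun i => aux_sum_sq_split x i
      -- Step A : someone is active
      have hnemp : Nonempty N := by
        have : 0 < Fintype.card N := by omega
        exact Fintype.card_pos_iff.mp this
      have hA : ∃ j, 0 < x j := by
        by_contra hC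
        push_neg at hC
        have hall : ∀ j, x j = 0 := fun j => le_antisymm (hC j) (hx0 j)
        obtain ⟨i⟩ := hnemp
        have hdev := hbest i (v / 4) (by positivity)
        have hz0 : ∀ l, 0 ≤ Function.update x i (v / 4) l := by
          intro l
          rcases eq_or_ne l i with h | h
          · rw [h, Function.update_self]; positivity
          · rw [Function.update_of_ne h]; exact hx0 l
        have hfz := hfdef _ hz0 i
        have hex : ∃ j, 0 < Function.update x i (v / 4) j :=
          ⟨i, by rw [Function.update_self]; positivity⟩
        rw [if_pos hex] at hfz
        have hsum : ∑ j, (Function.update x i (v / 4) j) ^ 2 = (v / 4) ^ 2 := by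
          rw [aux_sum_update_sq,
            show (∑ j ∈ Finset.univ.erase i, x j ^ 2) = 0 from
              Finset.sum_eq_zero (fun j _ => by rw [hall j]; ring), add_zero]
        have hfz' : f (Function.update x i (v / 4)) i = 1 := by
          rw [hfz, hsum, Function.update_self, div_self (by positivity)]
        have hfx := hfdef x hx0 i
        have hnex : ¬ ∃ j, 0 < x j := by
          rintro ⟨j, hj⟩; rw [hall j] at hj; exact lt_irrefl 0 hj
        rw [if_neg hnex] at hfx
        simp only [payoff, hfz', hfx, Function.update_self, hall i] at hdev
        have hcast : (2 : ℝ) ≤ (n : ℝ) := by exact_mod_cast hn2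
        have hnpos : (0 : ℝ) < (n : ℝ) := by linarith
        have : 1 / (n : ℝ) * v ≤ v / 2 := by
          rw [div_mul_eq_mul_div, one_mul, div_le_div_iff₀ hnpos (by norm_num)]
          nlinarith
        linarith
      -- Step B : two distinct actives
      have hB : ∃ a b, a ≠ b ∧ 0 < x a ∧ 0 < x b := by
        obtain ⟨i0, hi0⟩ := hA
        by_contra hC
        push_neg at hC
        have honly : ∀ j, j ≠ i0 → x j = 0 := by
          intro j hj
          by_contra hj0
          have hjpos : 0 < x j := lt_of_le_of_ne (hx0 j) (Ne.symm hj0)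
          exact absurd hi0 (not_lt.mpr (hC j i0 hj hjpos))
        have hT0 : (∑ j ∈ Finset.univ.erase i0, x j ^ 2) = 0 :=
          Finset.sum_eq_zero (fun j hj => by
            rw [honly j (Finset.ne_of_mem_erase hj)]; ring)
        have hdev := hbest i0 (x i0 / 2) (by positivity)
        have hz0 : ∀ l, 0 ≤ Function.update x i0 (x i0 / 2) l := by
          intro l
          rcases eq_or_ne l i0 with h | h
          · rw [h, Function.update_self]; positivity
          · rw [Function.update_of_ne h]; exact hx0 l
        have hfz := hfdef _ hz0 i0
        rw [if_pos ⟨i0, by rw [Function.update_self]; positivity⟩] at hfz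
        have hfz' : f (Function.update x i0 (x i0 / 2)) i0 = 1 := by
          rw [hfz, aux_sum_update_sq, hT0, add_zero, Function.update_self,
            div_self (by positivity)]
        have hfx := hfdef x hx0 i0
        rw [if_pos ⟨i0, hi0⟩] at hfx
        have hSx : S = x i0 ^ 2 := by rw [hS' i0]; simp only [hTdef]; rw [hT0, add_zero]
        have hfx' : f x i0 = 1 := by
          rw [hfx, ← hSdef, hSx, div_self (by positivity)]
        simp only [payoff, hfz', hfx', Function.update_self] at hdev
        linarith
      -- every player has an active opponent
      have hother : ∀ i, ∃ j, j ≠ i ∧ 0 < x j := by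
        intro i
        obtain ⟨a, b, hab, ha, hb⟩ := hB
        rcases eq_or_ne a i with h | h
        · exact ⟨b, by rw [← h]; exact hab.symm, hb⟩
        · exact ⟨a, h, ha⟩
      have hTpos : ∀ i, 0 < T i := by
        intro i
        obtain ⟨j, hji, hj⟩ := hother i
        have hmem : j ∈ Finset.univ.erase i := Finset.mem_erase.mpr ⟨hji, Finset.mem_univ j⟩
        have h1 : x j ^ 2 ≤ T i :=
          Finset.single_le_sum (fun l _ => sq_nonneg (x l)) hmem
        nlinarith
      -- Nash inequality in analytic form
      have hineq : ∀ i, ∀ y, 0 ≤ y →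
          v * y ^ 2 / (y ^ 2 + T i) - y ≤ v * (x i) ^ 2 / ((x i) ^ 2 + T i) - x i := by
        intro i y hy
        have hdev := hbest i y hy
        obtain ⟨j, hji, hj⟩ := hother i
        have hz0 : ∀ l, 0 ≤ Function.update x i y l := by
          intro l
          rcases eq_or_ne l i with h | h
          · rw [h, Function.update_self]; exact hy
          · rw [Function.update_of_ne h]; exact hx0 l
        have hfz := hfdef _ hz0 i
        rw [if_pos ⟨j, by rw [Function.update_of_ne hji]; exact hj⟩] at hfz
        have hfx := hfdef x hx0 i
        rw [if_pos hA] at hfx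
        simp only [payoff, hfz, hfx, Function.update_self, aux_sum_update_sq, ← hSdef]
          at hdev
        have e1 : y ^ 2 / (y ^ 2 + T i) * v = v * y ^ 2 / (y ^ 2 + T i) := by ring
        have e2 : x i ^ 2 / S * v = v * (x i) ^ 2 / ((x i) ^ 2 + T i) := by
          rw [hS' i]; ring
        rw [e1, e2] at hdev
        exact hdev
      -- first order conditions and participation constraint
      have hfoc : ∀ i, 0 < x i → 2 * v * x i * T i = (x i ^ 2 + T i) ^ 2 :=
        fun i hi => aux_foc v (T i) (x i) (hTpos i) hi (hineq i)
      have hpayge : ∀ i, 0 < x i → x i ^ 2 + T i ≤ v * x i := by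
        intro i hi
        have h0 := hineq i 0 (le_refl 0)
        norm_num at h0
        have hden : 0 < x i ^ 2 + T i := by nlinarith [hTpos i, sq_nonneg (x i)]
        have h1 : x i * (x i ^ 2 + T i) ≤ v * x i ^ 2 := by
          rw [← le_div_iff₀ hden]; linarith
        nlinarith [hi]
      -- all active players exert the same effort
      have hsame : ∀ i j, 0 < x i → 0 < x j → x i = x j := by
        intro i j hi hj
        by_contra hnexx
        have hij : i ≠ j := fun h => hnexx (by rw [h])
        have hTi : T i = S - x i ^ 2 := by linarith [hS' i]
        have hTj : T j = S - x j ^ 2 := by linarith [hS' j]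
        have e1 : 2 * v * x i * (S - x i ^ 2) = S ^ 2 := by
          have h := hfoc i hi; rw [hTi] at h; linear_combination h
        have e2 : 2 * v * x j * (S - x j ^ 2) = S ^ 2 := by
          have h := hfoc j hj; rw [hTj] at h; linear_combination h
        have p1 : S ≤ v * x i := by have := hpayge i hi; linarith [hS' i]
        have p2 : S ≤ v * x j := by have := hpayge j hj; linarith [hS' j]
        have hST : S = x i ^ 2 + x i * x j + x j ^ 2 := by
          have hprod : (2 * v * (x i - x j)) * (S - (x i ^ 2 + x i * x j + x j ^ 2)) = 0 := by
            linear_combination e1 - e2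
          have h2v : 2 * v * (x i - x j) ≠ 0 :=
            mul_ne_zero (by positivity) (sub_ne_zero.mpr hnexx)
          have := (mul_eq_zero.mp hprod).resolve_left h2v
          linarith
        have hSpos : 0 < S := by nlinarith [mul_pos hi hi]
        have e1' : S ^ 2 = 2 * v * x i * x j * (x i + x j) := by
          linear_combination (2 * v * x i) * hST - e1
        have e2' : S ^ 2 = 2 * v * x j * x i * (x i + x j) := by
          linear_combination (2 * v * x j) * hST - e2
        have g1 : x i ^ 2 ≥ x i * x j + x j ^ 2 := by
          nlinarith [e1', hST, hSpos,
            mul_nonneg (sub_nonneg.mpr p1) (mul_nonneg hj.le (by linarith : (0:ℝ) ≤ x i + x j))]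
        have g2 : x j ^ 2 ≥ x i * x j + x i ^ 2 := by
          nlinarith [e2', hST, hSpos,
            mul_nonneg (sub_nonneg.mpr p2) (mul_nonneg hi.le (by linarith : (0:ℝ) ≤ x i + x j))]
        nlinarith [mul_pos hi hj]
      -- conclude
      obtain ⟨a, b, hab, ha, hb⟩ := hB
      set A := Finset.univ.filter (fun i => 0 < x i) with hAdef
      have haA : a ∈ A := by simp [hAdef, ha]
      have hbA : b ∈ A := by simp [hAdef, hb]
      have hcard2 : 2 ≤ A.card := by
        have hsub : ({a, b} : Finset N) ⊆ A := by
          intro t ht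
          rcases Finset.mem_insert.mp ht with h | h
          · rw [h]; exact haA
          · rw [Finset.mem_singleton.mp h]; exact hbA
        calc 2 = ({a, b} : Finset N).card := (Finset.card_pair hab).symm
          _ ≤ A.card := Finset.card_le_card hsub
      have hallc : ∀ i ∈ A, x i = x a := by
        intro i hi
        exact hsame i a (by simpa [hAdef] using hi) ha
      have hSc : S = (A.card : ℝ) * (x a) ^ 2 := by
        have h1 : ∑ j ∈ A, x j ^ 2 = S := by
          rw [hSdef]
          refine Finset.sum_subset (Finset.subset_univ A) (fun j _ hj => ?_)
          have : x j = 0 := le_antisymm (not_lt.mp (by simpa [hAdef] using hj)) (hx0 j)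
          rw [this]; ring
        rw [← h1, Finset.sum_congr rfl (fun j hj => by rw [hallc j hj]),
          Finset.sum_const, nsmul_eq_mul]
      set m := (A.card : ℝ) with hmdef
      set c := x a with hcdef
      have hc : 0 < c := ha
      have hm2 : (2 : ℝ) ≤ m := by rw [hmdef]; exact_mod_cast hcard2
      have hTa : T a = m * c ^ 2 - c ^ 2 := by
        have := hS' a; rw [hSc] at this; linarith
      have hc3 : c ^ 3 * (2 * v * (m - 1)) = c ^ 3 * (m ^ 2 * c) := by
        have h := hfoc a ha; rw [hTa] at h; linear_combination h
      have hkey : 2 * v * (m - 1) = m ^ 2 * c :=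
        mul_left_cancel₀ (pow_ne_zero 3 hc.ne') hc3
      have h5 : m * c ^ 2 ≤ v * c := by
        have := hpayge a ha; rw [hTa] at this; linarith
      have hvc : m * c ≤ v := by nlinarith [hc]
      have hmle : m ≤ 2 := by
        nlinarith [mul_nonneg (by linarith : (0:ℝ) ≤ m) (sub_nonneg.mpr hvc)]
      have hmeq : m = 2 := le_antisymm hmle hm2
      have hcv : c = v / 2 := by rw [hmeq] at hkey; linarith
      have hcard : A.card = 2 := by rw [hmdef] at hmeq; exact_mod_cast hmeq
      refine ⟨A, hcard, fun i => ?_⟩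
      by_cases hi : i ∈ A
      · rw [if_pos hi, ← hcv]; exact hallc i hi
      · rw [if_neg hi]
        exact le_antisymm (not_lt.mp (by simpa [hAdef] using hi)) (hx0 i)
    · -- backward direction
      rintro ⟨A, hA2, hxA⟩
      obtain ⟨a, b, hab, hABeq⟩ := Finset.card_eq_two.mp hA2
      have hx0 : ∀ i, 0 ≤ x i := by
        intro i; rw [hxA i]; split_ifs
        · linarith
        · exact le_refl 0
      have hS : ∑ j, x j ^ 2 = v ^ 2 / 2 := by
        calc ∑ j, x j ^ 2 = ∑ j, (if j ∈ A then (v / 2) ^ 2 else 0) :=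
              Finset.sum_congr rfl (fun j _ => by rw [hxA j]; split_ifs <;> ring)
          _ = ∑ j ∈ A, (v / 2) ^ 2 := by rw [Finset.sum_ite_mem, Finset.univ_inter]
          _ = v ^ 2 / 2 := by rw [Finset.sum_const, hA2]; push_cast; ring
      refine ⟨hx0, ?_⟩
      intro i y hy
      have hz0 : ∀ l, 0 ≤ Function.update x i y l := by
        intro l
        rcases eq_or_ne l i with h | h
        · rw [h, Function.update_self]; exact hy
        · rw [Function.update_of_ne h]; exact hx0 l
      have hotherj : ∃ j, j ≠ i ∧ j ∈ A := by
        rcases eq_or_ne a i with h | h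
        · exact ⟨b, by rw [← h]; exact hab.symm, by rw [hABeq]; simp⟩
        · exact ⟨a, h, by rw [hABeq]; simp⟩
      obtain ⟨j, hji, hjA⟩ := hotherj
      have hxj : x j = v / 2 := by rw [hxA j, if_pos hjA]
      have hTi : ∑ l ∈ Finset.univ.erase i, x l ^ 2 = v ^ 2 / 2 - x i ^ 2 := by
        have := aux_sum_sq_split x i; linarith [hS]
      have hexz : ∃ l, 0 < Function.update x i y l :=
        ⟨j, by rw [Function.update_of_ne hji, hxj]; positivity⟩
      have hfz := hfdef _ hz0 i
      rw [if_pos hexz] at hfz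
      have hfx := hfdef x hx0 i
      rw [if_pos ⟨j, by rw [hxj]; positivity⟩] at hfx
      show f (Function.update x i y) i * v - Function.update x i y i ≤ f x i * v - x i
      rw [hfz, hfx, Function.update_self, aux_sum_update_sq x i y, hTi, hS]
      by_cases hiA : i ∈ A
      · have hxi : x i = v / 2 := by rw [hxA i, if_pos hiA]
        rw [hxi]
        have h1 : (v / 2) ^ 2 / (v ^ 2 / 2) * v - v / 2 = 0 := by
          field_simp; ring
        have hden : 0 < y ^ 2 + (v ^ 2 / 2 - (v / 2) ^ 2) := by
          have : v ^ 2 / 2 - (v / 2) ^ 2 = (v / 2) ^ 2 := by ring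
          rw [this]; positivity
        have h2 : y ^ 2 / (y ^ 2 + (v ^ 2 / 2 - (v / 2) ^ 2)) * v - y ≤ 0 := by
          rw [sub_nonpos, div_mul_eq_mul_div, div_le_iff₀ hden]
          nlinarith [mul_nonneg hy (sq_nonneg (y - v / 2))]
        linarith
      · have hxi : x i = 0 := by rw [hxA i, if_neg hiA]
        rw [hxi]
        have h1 : (0:ℝ) ^ 2 / (v ^ 2 / 2) * v - 0 = 0 := by norm_num
        have hden : 0 < y ^ 2 + (v ^ 2 / 2 - (0:ℝ) ^ 2) := by
          rw [show (v ^ 2 / 2 - (0:ℝ) ^ 2) = v ^ 2 / 2 by ring]; positivity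
        have h2 : y ^ 2 / (y ^ 2 + (v ^ 2 / 2 - (0:ℝ) ^ 2)) * v - y ≤ 0 := by
          rw [sub_nonpos, div_mul_eq_mul_div, div_le_iff₀ hden]
          nlinarith [mul_nonneg hy (sq_nonneg (y - v / 2)), mul_nonneg hy (sq_nonneg v)]
        linarith
  refine ⟨?_, key⟩
  intro x hx
  obtain ⟨A, hA2, hAx⟩ := (key x).1 hx
  calc ∑ i, x i = ∑ i, (if i ∈ A then v / 2 else 0) := by simp_rw [hAx]
    _ = ∑ i ∈ A, v / 2 := by rw [Finset.sum_ite_mem, Finset.univ_inter]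
    _ = v := by rw [Finset.sum_const, hA2]; push_cast; ring
end

section
/- Let 3 ≤ a ≤ n and common value v > 0. Under the CSF with winning probabilities proportional to x_i^{a/(a−1)}, for any subset A ⊆ N with |A| = a − 1, the tuple where each i ∈ A exerts v·a·(a−2)/(a−1)³ and the rest exert 0 is a Nash equilibrium, whose aggregate effort v·a·(a−2)/(a−1)² is strictly less than v. Hence this CSF is not strictly extractive under v. -/
open Finset

open Finset

lemma amgm2' (A w : ℝ) (hA : 3 ≤ A) (hw : 0 < w) :
    A * w ≤ w ^ A + (A - 1) := by
  have hA0 : (0:ℝ) < A := by linarith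
  have hq : (0:ℝ) < w ^ A := Real.rpow_pos_of_pos hw _
  have h := Real.geom_mean_le_arith_mean2_weighted
    (w₁ := 1/A) (w₂ := (A-1)/A) (p₁ := w ^ A) (p₂ := 1)
    (by positivity) (by apply div_nonneg <;> linarith) hq.le zero_le_one (by field_simp; ring)
  rw [Real.one_rpow, mul_one, one_div, Real.rpow_rpow_inv hw.le hA0.ne'] at h
  have h2 := mul_le_mul_of_nonneg_left h hA0.le
  calc A * w ≤ A * (A⁻¹ * w ^ A + (A - 1) / A * 1) := h2
    _ = w ^ A + (A - 1) := by field_simp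

lemma amgm3' (A w : ℝ) (hA : 3 ≤ A) (hw : 0 < w) :
    (A^2 - A + 1) * w ≤ A * w ^ A + w ^ (1 - A) + A * (A - 2) := by
  have hT : (0:ℝ) < A^2 - A + 1 := by nlinarith
  have hq : (0:ℝ) < w ^ A := Real.rpow_pos_of_pos hw _
  have ht : (0:ℝ) < w ^ (1 - A) := Real.rpow_pos_of_pos hw _
  have h := Real.geom_mean_le_arith_mean3_weighted
    (w₁ := A/(A^2 - A + 1)) (w₂ := 1/(A^2 - A + 1)) (w₃ := A*(A-2)/(A^2 - A + 1))
    (p₁ := w ^ A) (p₂ := w ^ (1-A)) (p₃ := 1)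
    (by positivity) (by positivity)
    (by apply div_nonneg _ hT.le; nlinarith) hq.le ht.le zero_le_one
    (by rw [← add_div, ← add_div, div_eq_one_iff_eq hT.ne']; ring)
  rw [Real.one_rpow, mul_one, ← Real.rpow_mul hw.le, ← Real.rpow_mul hw.le,
    ← Real.rpow_add hw] at h
  have he : A * (A/(A^2-A+1)) + (1-A) * (1/(A^2-A+1)) = 1 := by
    rw [mul_div_assoc', mul_one_div, ← add_div, div_eq_one_iff_eq hT.ne']; ring
  rw [he, Real.rpow_one] at h
  have h2 := mul_le_mul_of_nonneg_left h hT.le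
  calc (A^2 - A + 1) * w
      ≤ (A^2-A+1) * (A/(A^2-A+1) * w^A + 1/(A^2-A+1) * w^(1-A) + A*(A-2)/(A^2-A+1) * 1) := h2
    _ = A * w ^ A + w ^ (1 - A) + A * (A - 2) := by
      field_simp; exact mul_div_cancel_left₀ _ (by nlinarith : (0:ℝ) < A * (A - 1) + 1).ne'

lemma key_out' (A v w : ℝ) (hA : 3 ≤ A) (hv : 0 < v) (hw : 0 < w) :
    w ^ A / (w ^ A + (A - 1)) * v - v * A * (A - 2) / (A - 1) ^ 3 * w ^ (A - 1) ≤ 0 := by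
  have hA1 : (0:ℝ) < A - 1 := by linarith
  have hq : (0:ℝ) < w ^ A := Real.rpow_pos_of_pos hw _
  have hp : (0:ℝ) < w ^ (A - 1) := Real.rpow_pos_of_pos hw _
  have hc : (0:ℝ) < v * A * (A - 2) / (A - 1) ^ 3 := by
    have h1 : (0:ℝ) < A := by linarith
    have h2 : (0:ℝ) < A - 2 := by linarith
    exact div_pos (mul_pos (mul_pos hv h1) h2) (by positivity)
  have hpw : w ^ (A - 1) * w = w ^ A := by
    nth_rewrite 2 [← Real.rpow_one w]
    rw [← Real.rpow_add hw]; norm_num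
  have hden : (0:ℝ) < w ^ A + (A - 1) := by linarith
  rw [sub_nonpos, div_mul_eq_mul_div, div_le_iff₀ hden]
  have hamgm := amgm2' A w hA hw
  have hvc : v ≤ v * A * (A - 2) / (A - 1) ^ 3 * A := by
    rw [div_mul_eq_mul_div, le_div_iff₀ (by positivity)]
    nlinarith [mul_nonneg hv.le (mul_nonneg (show (0:ℝ) ≤ A by linarith)
      (show (0:ℝ) ≤ A - 3 by linarith))]
  have h1 : v * A * (A - 2) / (A - 1) ^ 3 * (A * w) ≤
      v * A * (A - 2) / (A - 1) ^ 3 * (w ^ A + (A - 1)) :=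
    mul_le_mul_of_nonneg_left hamgm hc.le
  have h2 : v * w ≤ v * A * (A - 2) / (A - 1) ^ 3 * A * w :=
    mul_le_mul_of_nonneg_right hvc hw.le
  calc w ^ A * v = (v * w) * w ^ (A-1) := by rw [← hpw]; ring
    _ ≤ (v * A * (A - 2) / (A - 1) ^ 3 * A * w) * w ^ (A-1) :=
        mul_le_mul_of_nonneg_right h2 hp.le
    _ = (v * A * (A - 2) / (A - 1) ^ 3 * (A * w)) * w ^ (A-1) := by ring
    _ ≤ (v * A * (A - 2) / (A - 1) ^ 3 * (w ^ A + (A - 1))) * w ^ (A-1) :=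
        mul_le_mul_of_nonneg_right h1 hp.le
    _ = v * A * (A - 2) / (A - 1) ^ 3 * w ^ (A - 1) * (w ^ A + (A - 1)) := by ring

lemma key_in' (A v w : ℝ) (hA : 3 ≤ A) (hv : 0 < v) (hw : 0 < w) :
    w ^ A / (w ^ A + (A - 2)) * v - v * A * (A - 2) / (A - 1) ^ 3 * w ^ (A - 1) ≤
      v / (A - 1) - v * A * (A - 2) / (A - 1) ^ 3 := by
  have hA1 : (0:ℝ) < A - 1 := by linarith
  have hq : (0:ℝ) < w ^ A := Real.rpow_pos_of_pos hw _
  have hp : (0:ℝ) < w ^ (A - 1) := Real.rpow_pos_of_pos hw _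
  have ht : (0:ℝ) < w ^ (1 - A) := Real.rpow_pos_of_pos hw _
  have hpw : w ^ (A - 1) * w = w ^ A := by
    nth_rewrite 2 [← Real.rpow_one w]
    rw [← Real.rpow_add hw]; norm_num
  have hpt : w ^ (A - 1) * w ^ (1 - A) = 1 := by
    rw [← Real.rpow_add hw]; norm_num
  have hamgm := amgm3' A w hA hw
  -- multiply AM-GM by p = w^(A-1)
  have key : (A^2 - A + 1) * w ^ A ≤
      A * (w ^ (A-1) * w ^ A) + 1 + A * (A - 2) * w ^ (A-1) := by
    have h2 := mul_le_mul_of_nonneg_right hamgm hp.le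
    calc (A^2 - A + 1) * w ^ A = ((A^2 - A + 1) * w) * w ^ (A-1) := by rw [← hpw]; ring
      _ ≤ (A * w ^ A + w ^ (1 - A) + A * (A - 2)) * w ^ (A-1) := h2
      _ = A * (w ^ (A-1) * w ^ A) + w ^ (A-1) * w ^ (1-A) + A * (A - 2) * w ^ (A-1) := by ring
      _ = A * (w ^ (A-1) * w ^ A) + 1 + A * (A - 2) * w ^ (A-1) := by rw [hpt]
  have hden : (0:ℝ) < w ^ A + (A - 2) := by nlinarith
  rw [sub_le_iff_le_add, div_mul_eq_mul_div, div_le_iff₀ hden]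
  have expand : (v / (A - 1) - v * A * (A - 2) / (A - 1) ^ 3
        + v * A * (A - 2) / (A - 1) ^ 3 * w ^ (A - 1)) * (w ^ A + (A - 2)) - w ^ A * v
      = v * (A - 2) / (A - 1) ^ 3 *
        (A * (w ^ (A-1) * w ^ A) + 1 + A * (A - 2) * w ^ (A-1) - (A^2 - A + 1) * w ^ A) := by
    field_simp
    ring
  nlinarith [mul_nonneg (le_of_lt (show (0:ℝ) < v * (A-2) / (A-1)^3 from
      div_pos (mul_pos hv (by linarith)) (by positivity)))
    (sub_nonneg.mpr key), expand]

theorem stmt_15 {N : Type*} [Fintype N] [DecidableEq N]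
    (n : ℕ) (hn : Fintype.card N = n)
    (v : ℝ) (hv : 0 < v)
    (a : ℕ) (ha3 : 3 ≤ a) (han : a ≤ n)
    (f : (N → ℝ) → N → ℝ)
    (hfdef : ∀ x : N → ℝ, (∀ l, 0 ≤ x l) → ∀ i : N,
      f x i = if ∃ j, 0 < x j
        then x i ^ ((a : ℝ) / ((a : ℝ) - 1)) / ∑ j, x j ^ ((a : ℝ) / ((a : ℝ) - 1))
        else 1 / (n : ℝ))
    (A : Finset N) (hA : A.card = a - 1)
    (xs : N → ℝ)
    (hxs : xs = fun i => if i ∈ A then v * a * ((a : ℝ) - 2) / ((a : ℝ) - 1) ^ 3 else 0) :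
    IsNash f (fun _ => v) xs ∧
      ∑ i, xs i = v * a * ((a : ℝ) - 2) / ((a : ℝ) - 1) ^ 2 ∧
      v * a * ((a : ℝ) - 2) / ((a : ℝ) - 1) ^ 2 < v ∧
      ¬ ((∃ y : N → ℝ, IsNash f (fun _ => v) y ∧ ∑ i, y i = v) ∧
          (∀ y : N → ℝ, IsNash f (fun _ => v) y → ∑ i, y i = v)) := by
  have hA3 : (3:ℝ) ≤ (a:ℝ) := by exact_mod_cast ha3
  have hA1 : (0:ℝ) < (a:ℝ) - 1 := by linarith
  have hA2 : (0:ℝ) < (a:ℝ) - 2 := by linarith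
  set r : ℝ := (a:ℝ) / ((a:ℝ) - 1) with hrdef
  have hr0 : r ≠ 0 := ne_of_gt (div_pos (by linarith) hA1)
  set c : ℝ := v * a * ((a:ℝ) - 2) / ((a:ℝ) - 1) ^ 3 with hcdef
  have hc : 0 < c := div_pos (mul_pos (mul_pos hv (by linarith)) hA2) (by positivity)
  have hxsval : ∀ i, xs i = if i ∈ A then c else 0 := by
    intro i; rw [hxs]
  have hxs0 : ∀ l, 0 ≤ xs l := by
    intro l; rw [hxsval]; split_ifs; exacts [hc.le, le_refl 0]
  have h1a : 1 ≤ a := by omega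
  have hcardA : (A.card : ℝ) = (a:ℝ) - 1 := by
    rw [hA, Nat.cast_sub h1a, Nat.cast_one]
  have hcard2 : 1 < A.card := by rw [hA]; omega
  have hxpos : ∃ j, 0 < xs j := by
    obtain ⟨j, hj⟩ := Finset.card_pos.mp (Nat.lt_trans Nat.zero_lt_one hcard2)
    exact ⟨j, by rw [hxsval]; simp [hj, hc]⟩
  have hcr : 0 < c ^ r := Real.rpow_pos_of_pos hc r
  have hxsr : ∀ j, xs j ^ r = if j ∈ A then c ^ r else 0 := by
    intro j; rw [hxsval]; split_ifs
    · rfl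
    · exact Real.zero_rpow hr0
  have hsum_r : ∑ j, xs j ^ r = ((a:ℝ) - 1) * c ^ r := by
    simp only [hxsr]
    rw [Finset.sum_ite_mem, Finset.univ_inter, Finset.sum_const, nsmul_eq_mul, hcardA]
  have hsum_xs : ∑ j, xs j = ((a:ℝ) - 1) * c := by
    simp only [hxsval]
    rw [Finset.sum_ite_mem, Finset.univ_inter, Finset.sum_const, nsmul_eq_mul, hcardA]
  have hbase : ∀ i, payoff f (fun _ => v) xs i
      = if i ∈ A then v / ((a:ℝ) - 1) - c else 0 := by
    intro i
    have hf : f xs i = (if i ∈ A then c ^ r else 0) / (((a:ℝ) - 1) * c ^ r) := by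
      rw [hfdef xs hxs0 i, if_pos hxpos, hsum_r, hxsr]
    have h1 : c ^ r ≠ 0 := ne_of_gt hcr
    have h2 : ((a:ℝ) - 1) ≠ 0 := ne_of_gt hA1
    simp only [payoff, hf, hxsval]
    split_ifs with hi
    · field_simp
    · simp
  have hNash : IsNash f (fun _ => v) xs := by
    refine ⟨hxs0, fun i y hy => ?_⟩
    set x' := Function.update xs i y with hx'def
    have hx'app : ∀ l, x' l = if l = i then y else xs l := by
      intro l; rw [hx'def, Function.update_apply]
    have hx'0 : ∀ l, 0 ≤ x' l := by
      intro l; rw [hx'app]; split_ifs; exacts [hy, hxs0 l]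
    obtain ⟨j0, hj0A, hj0i⟩ := Finset.exists_mem_ne hcard2 i
    have hx'pos : ∃ j, 0 < x' j := by
      refine ⟨j0, ?_⟩
      rw [hx'app, if_neg hj0i, hxsval, if_pos hj0A]; exact hc
    set S : ℝ := (if i ∈ A then (a:ℝ) - 2 else (a:ℝ) - 1) * c ^ r with hSdef
    have hSpos : 0 < S := by
      rw [hSdef]; apply mul_pos _ hcr; split_ifs; exacts [hA2, hA1]
    have hsum' : ∑ j, x' j ^ r = y ^ r + S := by
      have hupd : ∀ j, x' j ^ r = Function.update (fun j => xs j ^ r) i (y ^ r) j := by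
        intro j
        rcases eq_or_ne j i with h | h
        · subst h; rw [hx'app, if_pos rfl, Function.update_self]
        · rw [hx'app, if_neg h, Function.update_of_ne h]
      rw [Finset.sum_congr rfl (fun j _ => hupd j),
        Finset.sum_update_of_mem (Finset.mem_univ i)]
      congr 1
      have : ∑ j ∈ Finset.univ \ {i}, xs j ^ r
          = (∑ j, xs j ^ r) - xs i ^ r := by
        rw [Finset.sum_sdiff_eq_sub (Finset.subset_univ _), Finset.sum_singleton]
      rw [this, hsum_r, hxsr, hSdef]
      split_ifs <;> ring
    have hfx' : f x' i = y ^ r / (y ^ r + S) := by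
      rw [hfdef x' hx'0 i, if_pos hx'pos, hsum', hx'def, Function.update_self]
    have hdev : payoff f (fun _ => v) x' i = y ^ r / (y ^ r + S) * v - y := by
      simp only [payoff, hfx']; rw [hx'def, Function.update_self]
    rw [hdev, hbase i]
    rcases eq_or_lt_of_le hy with h0 | hypos
    · subst h0
      rw [Real.zero_rpow hr0, zero_div, zero_mul, zero_sub, neg_zero]
      split_ifs with hi
      · rw [sub_nonneg, hcdef, div_le_div_iff₀ (by positivity) hA1]
        nlinarith [mul_pos hv hA1]
      · exact le_refl 0
    · -- y > 0
      set w : ℝ := (y / c) ^ (((a:ℝ) - 1))⁻¹ with hwdef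
      have hw : 0 < w := Real.rpow_pos_of_pos (div_pos hypos hc) _
      have hyw : y = c * w ^ ((a:ℝ) - 1) := by
        rw [hwdef, Real.rpow_inv_rpow (div_pos hypos hc).le (ne_of_gt hA1)]
        field_simp
      have hyr : y ^ r = c ^ r * w ^ (a:ℝ) := by
        rw [hyw, Real.mul_rpow hc.le (Real.rpow_nonneg hw.le _),
          ← Real.rpow_mul hw.le]
        congr 2
        rw [hrdef]; field_simp
      rw [hyr, hSdef, hyw]
      split_ifs with hi
      · have hrw : c ^ r * w ^ (a:ℝ) / (c ^ r * w ^ (a:ℝ) + ((a:ℝ) - 2) * c ^ r)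
            = w ^ (a:ℝ) / (w ^ (a:ℝ) + ((a:ℝ) - 2)) := by
          rw [show c ^ r * w ^ (a:ℝ) + ((a:ℝ) - 2) * c ^ r
              = c ^ r * (w ^ (a:ℝ) + ((a:ℝ) - 2)) by ring,
            mul_div_mul_left _ _ (ne_of_gt hcr)]
        rw [hrw]
        have := key_in' (a:ℝ) v w hA3 hv hw
        rw [← hcdef] at this
        linarith [this]
      · have hrw : c ^ r * w ^ (a:ℝ) / (c ^ r * w ^ (a:ℝ) + ((a:ℝ) - 1) * c ^ r)
            = w ^ (a:ℝ) / (w ^ (a:ℝ) + ((a:ℝ) - 1)) := by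
          rw [show c ^ r * w ^ (a:ℝ) + ((a:ℝ) - 1) * c ^ r
              = c ^ r * (w ^ (a:ℝ) + ((a:ℝ) - 1)) by ring,
            mul_div_mul_left _ _ (ne_of_gt hcr)]
        rw [hrw]
        have := key_out' (a:ℝ) v w hA3 hv hw
        rw [← hcdef] at this
        linarith [this]
  have hsum2 : ∑ i, xs i = v * a * ((a:ℝ) - 2) / ((a:ℝ) - 1) ^ 2 := by
    rw [hsum_xs, hcdef]; field_simp
  have hlt : v * a * ((a:ℝ) - 2) / ((a:ℝ) - 1) ^ 2 < v := by
    rw [div_lt_iff₀ (by positivity)]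
    nlinarith
  refine ⟨hNash, hsum2, hlt, ?_⟩
  rintro ⟨-, hall⟩
  have := hall xs hNash
  rw [hsum2] at this
  linarith
end

section
/- Under the Tullock CSF with squared efforts and common value v, if x* is a Nash equilibrium with set of active contestants A (those with positive effort), |A| = α ≥ 2, and all active efforts are equal, then each active effort equals 2v(α−1)/α² and the equilibrium payoff condition forces α = 2. -/
open Finset

theorem stmt_17 {N : Type*} [Fintype N] [DecidableEq N]
    (n : ℕ) (hn : Fintype.card N = n) (hn2 : 2 ≤ n)
    (v : ℝ) (hv : 0 < v)
    (f : (N → ℝ) → N → ℝ)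
    (hfdef : ∀ x : N → ℝ, (∀ l, 0 ≤ x l) → ∀ i : N,
      f x i = if ∃ j, 0 < x j then x i ^ 2 / ∑ j, x j ^ 2 else 1 / (n : ℝ))
    (x : N → ℝ) (hx : IsNash f (fun _ => v) x)
    (A : Finset N) (hA : ∀ i, i ∈ A ↔ 0 < x i)
    (α : ℕ) (hα : A.card = α) (hα2 : 2 ≤ α)
    (heq : ∀ i ∈ A, ∀ j ∈ A, x i = x j) :
    (∀ i ∈ A, x i = 2 * v * ((α : ℝ) - 1) / (α : ℝ) ^ 2) ∧ α = 2 := by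
  classical
  -- pick two distinct active contestants
  obtain ⟨i₀, hi₀, j₀, hj₀, hij⟩ : ∃ i₀ ∈ A, ∃ j₀ ∈ A, i₀ ≠ j₀ := by
    have : 1 < A.card := by omega
    exact Finset.one_lt_card.mp this
  set a : ℝ := (α : ℝ) with ha_def
  have ha2 : (2 : ℝ) ≤ a := by rw [ha_def]; exact_mod_cast hα2
  have ha0 : (0 : ℝ) < a := by linarith
  have ha1 : (1 : ℝ) < a := by linarith
  set t : ℝ := x i₀ with ht_def
  have ht : 0 < t := (hA i₀).mp hi₀
  have hxt : ∀ i ∈ A, x i = t := fun i hi => heq i hi i₀ hi₀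
  have hx0 : ∀ j, j ∉ A → x j = 0 := by
    intro j hj
    have := hx.1 j
    have h2 := (hA j).not.mp hj
    linarith [lt_or_eq_of_le this |>.resolve_left (fun h => h2 h) ]
  -- total sum of squares
  have hsum : ∑ j, x j ^ 2 = a * t ^ 2 := by
    rw [← Finset.sum_subset A.subset_univ (fun j _ hj => by rw [hx0 j hj]; ring)]
    rw [Finset.sum_congr rfl (fun j hj => by rw [hxt j hj]), Finset.sum_const, hα,
      nsmul_eq_mul]
  -- sum after i₀ deviates to y
  have hupdsum : ∀ y : ℝ, ∑ j, (Function.update x i₀ y j) ^ 2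
      = y ^ 2 + (a * t ^ 2 - t ^ 2) := by
    intro y
    have hfun : (fun j => (Function.update x i₀ y j) ^ 2)
        = Function.update (fun j => x j ^ 2) i₀ (y ^ 2) := by
      funext j
      by_cases h : j = i₀
      · subst h; simp
      · simp [Function.update_of_ne h]
    calc ∑ j, (Function.update x i₀ y j) ^ 2
        = ∑ j, Function.update (fun j => x j ^ 2) i₀ (y ^ 2) j := by rw [hfun]
      _ = y ^ 2 + ∑ j ∈ Finset.univ \ {i₀}, x j ^ 2 :=
          Finset.sum_update_of_mem (Finset.mem_univ i₀) (fun j => x j ^ 2) (y ^ 2)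
      _ = y ^ 2 + (a * t ^ 2 - t ^ 2) := by
          have := Finset.sum_eq_sum_sdiff_singleton_add (Finset.mem_univ i₀)
            (fun j => x j ^ 2)
          rw [hsum] at this
          rw [show t ^ 2 = x i₀ ^ 2 by rw [← ht_def]]
          linarith
  -- Nash inequality, rewritten
  have hineq : ∀ y : ℝ, 0 ≤ y →
      y ^ 2 / (y ^ 2 + (a * t ^ 2 - t ^ 2)) * v - y ≤ t ^ 2 / (a * t ^ 2) * v - t := by
    intro y hy
    have hnn : ∀ l, 0 ≤ Function.update x i₀ y l := by
      intro l
      by_cases h : l = i₀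
      · subst h; simpa using hy
      · rw [Function.update_of_ne h]; exact hx.1 l
    have hposj : 0 < Function.update x i₀ y j₀ := by
      rw [Function.update_of_ne (Ne.symm hij)]
      exact (hA j₀).mp hj₀
    have h := hx.2 i₀ y hy
    simp only [payoff] at h
    rw [hfdef x hx.1 i₀, if_pos ⟨i₀, ht⟩, hsum,
      hfdef _ hnn i₀, if_pos ⟨j₀, hposj⟩, hupdsum y, Function.update_self] at h
    exact h
  -- key polynomial inequality: (y - t) * S y ≥ 0 for y ≥ 0
  set S : ℝ → ℝ := fun y => a * y ^ 2 - v * (a - 1) * y + (a * (a - 1) * t ^ 2 - v * (a - 1) * t)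
    with hS_def
  have ht2 : (0:ℝ) < t ^ 2 := by positivity
  have key : ∀ y : ℝ, 0 ≤ y → 0 ≤ (y - t) * S y := by
    intro y hy
    have hd : 0 < (a - 1) * t ^ 2 + y ^ 2 := by
      have : 0 < (a - 1) * t ^ 2 := by nlinarith
      nlinarith
    have h := hineq y hy
    have hrhs : t ^ 2 / (a * t ^ 2) = 1 / a := by
      rw [div_eq_div_iff (by positivity) (by positivity)]; ring
    rw [hrhs] at h
    have hden : y ^ 2 + (a * t ^ 2 - t ^ 2) = (a - 1) * t ^ 2 + y ^ 2 := by ring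
    rw [hden] at h
    have h1 : v * y ^ 2 ≤ (v / a - t + y) * ((a - 1) * t ^ 2 + y ^ 2) := by
      rw [← div_le_iff₀ hd]
      have : v * y ^ 2 / ((a - 1) * t ^ 2 + y ^ 2)
          = y ^ 2 / ((a - 1) * t ^ 2 + y ^ 2) * v := by ring
      rw [this]
      have : 1 / a * v = v / a := by ring
      linarith [h, this]
    have h2 := mul_le_mul_of_nonneg_left h1 ha0.le
    have expand : (y - t) * S y
        = a * ((v / a - t + y) * ((a - 1) * t ^ 2 + y ^ 2)) - a * (v * y ^ 2) := by
      rw [hS_def]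
      field_simp
      ring
    rw [expand]
    linarith
  -- S is continuous
  have hScont : Continuous S := by
    rw [hS_def]
    exact (((continuous_const.mul (continuous_pow 2)).sub (continuous_const.mul continuous_id)).add continuous_const)
  have hSpos : ∀ y, t < y → 0 ≤ S y := by
    intro y hyt
    have hy : 0 ≤ y := by linarith
    have := key y hy
    by_contra hneg
    push_neg at hneg
    nlinarith
  have hSneg : ∀ y, 0 ≤ y → y < t → S y ≤ 0 := by
    intro y hy hyt
    have := key y hy
    by_contra hneg
    push_neg at hneg
    nlinarith
  have hSt0 : S t = 0 := by
    have h4 : 0 ≤ S t := by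
      have htend : Filter.Tendsto S (nhdsWithin t (Set.Ioi t)) (nhds (S t)) :=
        (hScont.tendsto t).mono_left nhdsWithin_le_nhds
      refine ge_of_tendsto htend ?_
      filter_upwards [self_mem_nhdsWithin] with y hy using hSpos y hy
    have h5 : S t ≤ 0 := by
      have htend : Filter.Tendsto S (nhdsWithin t (Set.Iio t)) (nhds (S t)) :=
        (hScont.tendsto t).mono_left nhdsWithin_le_nhds
      refine le_of_tendsto htend ?_
      filter_upwards [Ioo_mem_nhdsLT_of_mem (Set.mem_Ioc.mpr ⟨ht, le_refl t⟩)] with y hy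
      exact hSneg y hy.1.le hy.2
    linarith
  -- S t = 0 gives a² t = 2 v (a-1)
  have hteq : a ^ 2 * t = 2 * v * (a - 1) := by
    have : t * (a ^ 2 * t - 2 * v * (a - 1)) = 0 := by
      rw [hS_def] at hSt0; simp only at hSt0; nlinarith [hSt0]
    rcases mul_eq_zero.mp this with h | h
    · exact absurd h (ne_of_gt ht)
    · linarith
  have htval : t = 2 * v * (a - 1) / a ^ 2 := by
    rw [eq_div_iff (by positivity)]
    linarith
  -- S 0 ≤ 0 gives a * t ≤ v
  have hS0 : S 0 ≤ 0 := hSneg 0 le_rfl ht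
  have hatv : a * t ≤ v := by
    rw [hS_def] at hS0
    simp only at hS0
    by_contra hc
    push_neg at hc
    have hpos : 0 < (a - 1) * t := mul_pos (by linarith) ht
    nlinarith [mul_pos hpos (sub_pos.mpr hc), hS0]
  -- conclude a ≤ 2
  have ha_le : a ≤ 2 := by nlinarith
  have hα_eq : α = 2 := by
    have : (α : ℝ) ≤ 2 := by rw [← ha_def]; exact ha_le
    have : α ≤ 2 := by exact_mod_cast this
    omega
  refine ⟨fun i hi => ?_, hα_eq⟩
  rw [hxt i hi, htval, ha_def]
end

section
/- Under the Tullock CSF with squared efforts, in any Nash equilibrium all active contestants exert equal efforts: if x*_i and x*_k are both positive and satisfy the first-order condition 2v·x·(S − x²) = S² where S = ∑_{l active}(x*_l)², then x*_i = x*_k or ∑_{l ≠ i,k, active}(x*_l)² = x*_i·x*_k, and the latter case leads to a contradiction via a profitable deviation to zero effort. -/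
open Finset

theorem stmt_18 {N : Type*} [Fintype N] [DecidableEq N]
    (n : ℕ) (hn : Fintype.card N = n) (hn2 : 2 ≤ n)
    (v : ℝ) (hv : 0 < v)
    (f : (N → ℝ) → N → ℝ)
    (hfdef : ∀ x : N → ℝ, (∀ l, 0 ≤ x l) → ∀ i : N,
      f x i = if ∃ j, 0 < x j then x i ^ 2 / ∑ j, x j ^ 2 else 1 / (n : ℝ))
    (x : N → ℝ) (hx : IsNash f (fun _ => v) x)
    (A : Finset N) (hA : ∀ i, i ∈ A ↔ 0 < x i)
    (S : ℝ) (hS : S = ∑ l ∈ A, x l ^ 2)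
    (i k : N) (hi : 0 < x i) (hk : 0 < x k)
    (hFOCi : 2 * v * x i * (S - x i ^ 2) = S ^ 2)
    (hFOCk : 2 * v * x k * (S - x k ^ 2) = S ^ 2) :
    (x i = x k ∨ ∑ l ∈ A \ {i, k}, x l ^ 2 = x i * x k) ∧ x i = x k := by
  have hnn := hx.1
  -- total sum equals S
  have hsum : ∑ j, x j ^ 2 = S := by
    rw [hS]
    symm
    apply Finset.sum_subset (Finset.subset_univ A)
    intro l _ hl
    have : ¬ 0 < x l := fun h => hl ((hA l).mpr h)
    have : x l = 0 := le_antisymm (not_lt.mp this) (hnn l)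
    simp [this]
  have hSpos : 0 < S := by
    rw [hS]
    have hiA : i ∈ A := (hA i).mpr hi
    have : x i ^ 2 ≤ ∑ l ∈ A, x l ^ 2 :=
      Finset.single_le_sum (fun l _ => sq_nonneg (x l)) hiA
    nlinarith [sq_nonneg (x i)]
  -- equilibrium payoff lower bound from zero deviation (needs other positive player)
  have key : ∀ m : N, 0 < x m → (∃ j, j ≠ m ∧ 0 < x j) → S ≤ x m * v := by
    intro m hm ⟨j, hjm, hj⟩
    have hdev := hx.2 m 0 le_rfl
    have hupd : ∀ l, 0 ≤ Function.update x m 0 l := by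
      intro l; by_cases h : l = m <;> simp [h, Function.update, hnn l]
    have hf0 : f (Function.update x m 0) m = 0 := by
      rw [hfdef _ hupd m]
      have hex : ∃ l, 0 < Function.update x m 0 l :=
        ⟨j, by simpa [Function.update_of_ne hjm] using hj⟩
      simp [hex]
    have hfm : f x m = x m ^ 2 / S := by
      rw [hfdef x hnn m, if_pos ⟨m, hm⟩, hsum]
    have h1 : payoff f (fun _ => v) (Function.update x m 0) m = 0 := by
      simp [payoff, hf0]
    have h2 : payoff f (fun _ => v) x m = x m ^ 2 / S * v - x m := by
      simp [payoff, hfm]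
    rw [h1, h2] at hdev
    have : x m ≤ x m ^ 2 / S * v := by linarith
    have := mul_le_mul_of_nonneg_right this (le_of_lt hSpos)
    rw [div_mul_eq_mul_div, div_mul_eq_mul_div, mul_div_assoc,
      div_self (ne_of_gt hSpos)] at this
    nlinarith [hm]
  have main : x i = x k := by
    by_contra hne
    have hik : i ≠ k := fun h => hne (by rw [h])
    have hSab : S = x i ^ 2 + x i * x k + x k ^ 2 := by
      have h : 2 * v * x i * (S - x i ^ 2) = 2 * v * x k * (S - x k ^ 2) := by
        rw [hFOCi, hFOCk]
      have hsub : x i - x k ≠ 0 := sub_ne_zero.mpr hne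
      have : (x i - x k) * (S - (x i ^ 2 + x i * x k + x k ^ 2)) = 0 := by
        nlinarith [h]
      have := (mul_eq_zero.mp this).resolve_left hsub
      linarith
    have hvi : S ≤ x i * v := key i hi ⟨k, Ne.symm hik, hk⟩
    have hvk : S ≤ x k * v := key k hk ⟨i, hik, hi⟩
    -- 2*v*xi*(S - xi^2) = S^2 with S = a²+ab+b² gives 2*v*a*b*(a+b) = S²
    nlinarith [mul_pos hi hk, mul_pos hv hi, mul_pos hv hk, sq_nonneg (x i - x k),
      mul_le_mul_of_nonneg_left hvi (le_of_lt hk),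
      mul_le_mul_of_nonneg_left hvk (le_of_lt hi)]
  exact ⟨Or.inl main, main⟩
end
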